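/- arXiv:1010.5153 — 3 statements merged into one kernel-verified Lean document; each statement's English description precedes it below -/
import Mathlib

section
/- Let {f_i} be a d-decaying system, fix s > 1/d, and choose k such that Σ_{i=k}^∞ λ_i^s ≤ 1, where λ_i = sup_x |f_i'(x)|. Then for every n ≥ 1, the sum over all words (a_1,...,a_n) with each a_j ≥ k of |f_{a_1}∘⋯∘f_{a_n}([0,1])|^s is at most 1. Consequently dim_H Λ_k ≤ s. -/
open Set Filter Topology MeasureTheory

/-- A `d`-decaying iterated function system on `[0,1]`: `C¹` maps `f_i` (for `i ≥ 1`)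
with derivative `f' i`, satisfying uniform eventual contraction, disjointness of the
open images, and polynomial decay `ξ_i ≍ i^{-d}` of the derivative bounds. -/
structure DDecaying (d : ℝ) where
  f : ℕ → ℝ → ℝ
  f' : ℕ → ℝ → ℝ
  ξ : ℕ → ℝ
  lam : ℕ → ℝ
  hd : 1 < d
  maps : ∀ i : ℕ, 1 ≤ i → MapsTo (f i) (Icc (0:ℝ) 1) (Icc (0:ℝ) 1)
  hderiv : ∀ i : ℕ, 1 ≤ i → ∀ x ∈ Icc (0:ℝ) 1, HasDerivAt (f i) (f' i x) x
  contract : ∃ m : ℕ, 1 ≤ m ∧ ∃ A : ℝ, 0 < A ∧ A < 1 ∧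
    ∀ a : Fin m → ℕ, (∀ j, 1 ≤ a j) → ∀ x ∈ Icc (0:ℝ) 1,
      0 < |deriv ((List.ofFn fun j => f (a j)).foldr (· ∘ ·) id) x| ∧
        |deriv ((List.ofFn fun j => f (a j)).foldr (· ∘ ·) id) x| ≤ A
  derivBounds : ∀ i : ℕ, 1 ≤ i → ∀ x ∈ Icc (0:ℝ) 1, ξ i ≤ |f' i x| ∧ |f' i x| ≤ lam i
  decay : ∀ ε : ℝ, 0 < ε → ∃ C₁ : ℝ, 0 < C₁ ∧ ∃ C₂ : ℝ, 0 < C₂ ∧ ∀ i : ℕ, 1 ≤ i →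
    C₁ / (i : ℝ) ^ (d + ε) ≤ ξ i ∧ lam i ≤ C₂ / (i : ℝ) ^ (d - ε)
  disj : ∀ i j, 1 ≤ i → 1 ≤ j → i ≠ j →
    Disjoint (f i '' Ioo (0:ℝ) 1) (f j '' Ioo (0:ℝ) 1)

variable {d : ℝ}

/-- The composition `f_{a 0} ∘ f_{a 1} ∘ ⋯ ∘ f_{a (n-1)}`. -/
def DDecaying.comp (S : DDecaying d) (a : ℕ → ℕ) (n : ℕ) : ℝ → ℝ :=
  ((List.range n).map fun k => S.f (a k)).foldr (· ∘ ·) id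

/-- The approximating sequence `n ↦ f_{a 0} ∘ ⋯ ∘ f_{a (n-1)} (1)` for the projection `Π`. -/
def DDecaying.projSeq (S : DDecaying d) (a : ℕ → ℕ) (n : ℕ) : ℝ :=
  S.comp a n 1

/-- The `n`-th level cylinder determined by the digits `a 0, …, a (n-1)`. -/
def DDecaying.cyl (S : DDecaying d) (a : ℕ → ℕ) (n : ℕ) : Set ℝ :=
  S.comp a n '' Icc (0:ℝ) 1

/-- The attractor of the subsystem `{f_i}_{i ≥ k}`. -/
def DDecaying.attractor (S : DDecaying d) (k : ℕ) : Set ℝ :=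
  {x | ∃ a : ℕ → ℕ, (∀ n, k ≤ a n) ∧ Tendsto (S.projSeq a) atTop (𝓝 x)}

/-- The set `X_Φ = Π{a : a_{n+1} > Φ(a_n)}` of points all of whose digits grow at rate `Φ`. -/
def DDecaying.XPhi (S : DDecaying d) (Φ : ℕ → ℝ) : Set ℝ :=
  {x | ∃ a : ℕ → ℕ, (∀ n, 1 ≤ a n) ∧ (∀ n, Φ (a n) < (a (n + 1) : ℝ)) ∧
    Tendsto (S.projSeq a) atTop (𝓝 x)}

namespace DDecaying

/-- composition of a list of maps -/
def lcomp (S : DDecaying d) (l : List ℕ) : ℝ → ℝ := (l.map S.f).foldr (· ∘ ·) id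

lemma foldr_comp_append (L₁ L₂ : List (ℝ → ℝ)) :
    (L₁ ++ L₂).foldr (· ∘ ·) id = L₁.foldr (· ∘ ·) id ∘ L₂.foldr (· ∘ ·) id := by
  induction L₁ with
  | nil => rfl
  | cons g L ih => simp only [List.cons_append, List.foldr_cons, ih]; rfl

lemma lcomp_nil (S : DDecaying d) : S.lcomp [] = id := rfl

lemma lcomp_cons (S : DDecaying d) (i : ℕ) (l : List ℕ) :
    S.lcomp (i :: l) = S.f i ∘ S.lcomp l := rfl

lemma lcomp_append (S : DDecaying d) (l₁ l₂ : List ℕ) :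
    S.lcomp (l₁ ++ l₂) = S.lcomp l₁ ∘ S.lcomp l₂ := by
  simp only [lcomp, List.map_append, foldr_comp_append]

lemma lam_nonneg (S : DDecaying d) (i : ℕ) (hi : 1 ≤ i) : 0 ≤ S.lam i :=
  le_trans (abs_nonneg _) (S.derivBounds i hi 0 ⟨le_refl _, zero_le_one⟩).2

lemma mapsTo_lcomp (S : DDecaying d) (l : List ℕ) (hl : ∀ i ∈ l, 1 ≤ i) :
    MapsTo (S.lcomp l) (Icc (0:ℝ) 1) (Icc (0:ℝ) 1) := by
  induction l with
  | nil => exact mapsTo_id _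
  | cons i l ih =>
      rw [lcomp_cons]
      exact (S.maps i (hl i (List.mem_cons_self))).comp
        (ih fun j hj => hl j (List.mem_cons_of_mem _ hj))

lemma continuousOn_lcomp (S : DDecaying d) (l : List ℕ) (hl : ∀ i ∈ l, 1 ≤ i) :
    ContinuousOn (S.lcomp l) (Icc (0:ℝ) 1) := by
  induction l with
  | nil => exact continuousOn_id
  | cons i l ih =>
      rw [lcomp_cons]
      refine ContinuousOn.comp ?_ (ih fun j hj => hl j (List.mem_cons_of_mem _ hj))
        (S.mapsTo_lcomp l fun j hj => hl j (List.mem_cons_of_mem _ hj))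
      exact fun x hx =>
        ((S.hderiv i (hl i (List.mem_cons_self)) x hx).continuousAt).continuousWithinAt

lemma lip_f (S : DDecaying d) (i : ℕ) (hi : 1 ≤ i) {x y : ℝ}
    (hx : x ∈ Icc (0:ℝ) 1) (hy : y ∈ Icc (0:ℝ) 1) :
    |S.f i x - S.f i y| ≤ S.lam i * |x - y| := by
  have := Convex.norm_image_sub_le_of_norm_hasDerivWithin_le
    (f := S.f i) (f' := S.f' i) (s := Icc (0:ℝ) 1) (C := S.lam i)
    (fun z hz => (S.hderiv i hi z hz).hasDerivWithinAt)
    (fun z hz => by rw [Real.norm_eq_abs]; exact (S.derivBounds i hi z hz).2)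
    (convex_Icc 0 1) hy hx
  simpa [Real.norm_eq_abs] using this

lemma lip_lcomp (S : DDecaying d) (l : List ℕ) (hl : ∀ i ∈ l, 1 ≤ i) {x y : ℝ}
    (hx : x ∈ Icc (0:ℝ) 1) (hy : y ∈ Icc (0:ℝ) 1) :
    |S.lcomp l x - S.lcomp l y| ≤ (l.map S.lam).prod * |x - y| := by
  induction l with
  | nil => simp [lcomp_nil]
  | cons i l ih =>
      have hl' : ∀ j ∈ l, 1 ≤ j := fun j hj => hl j (List.mem_cons_of_mem _ hj)
      have hi : 1 ≤ i := hl i (List.mem_cons_self)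
      have hu := S.mapsTo_lcomp l hl' hx
      have hv := S.mapsTo_lcomp l hl' hy
      calc |S.lcomp (i :: l) x - S.lcomp (i :: l) y|
          = |S.f i (S.lcomp l x) - S.f i (S.lcomp l y)| := by rw [lcomp_cons]; rfl
        _ ≤ S.lam i * |S.lcomp l x - S.lcomp l y| := S.lip_f i hi hu hv
        _ ≤ S.lam i * ((l.map S.lam).prod * |x - y|) :=
            mul_le_mul_of_nonneg_left (ih hl') (S.lam_nonneg i hi)
        _ = ((i :: l).map S.lam).prod * |x - y| := by simp [mul_assoc]

lemma prod_map_lam_nonneg (S : DDecaying d) (l : List ℕ) (hl : ∀ i ∈ l, 1 ≤ i) :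
    0 ≤ (l.map S.lam).prod := by
  induction l with
  | nil => simp
  | cons i l ih =>
      simp only [List.map_cons, List.prod_cons]
      exact mul_nonneg (S.lam_nonneg i (hl i (List.mem_cons_self)))
        (ih fun j hj => hl j (List.mem_cons_of_mem _ hj))

end DDecaying

namespace DDecaying

lemma lip_block (S : DDecaying d) {m : ℕ} {A : ℝ}
    (hcon : ∀ a : Fin m → ℕ, (∀ j, 1 ≤ a j) → ∀ x ∈ Icc (0:ℝ) 1,
      0 < |deriv ((List.ofFn fun j => S.f (a j)).foldr (· ∘ ·) id) x| ∧
        |deriv ((List.ofFn fun j => S.f (a j)).foldr (· ∘ ·) id) x| ≤ A)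
    (l : List ℕ) (hl : ∀ i ∈ l, 1 ≤ i) (hlen : l.length = m) {x y : ℝ}
    (hx : x ∈ Icc (0:ℝ) 1) (hy : y ∈ Icc (0:ℝ) 1) :
    |S.lcomp l x - S.lcomp l y| ≤ A * |x - y| := by
  subst hlen
  have hofn : (List.ofFn fun j => S.f (l.get j)) = l.map S.f := by
    conv_rhs => rw [← List.ofFn_get l, List.map_ofFn]
    rfl
  have hg := hcon l.get (fun j => hl _ (l.get_mem _)) 
  rw [hofn] at hg
  set g : ℝ → ℝ := S.lcomp l with hgdef
  have hg' : ∀ z ∈ Icc (0:ℝ) 1, 0 < |deriv g z| ∧ |deriv g z| ≤ A := hg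
  have hdiff : ∀ z ∈ Icc (0:ℝ) 1, HasDerivAt g (deriv g z) z := by
    intro z hz
    by_cases h : DifferentiableAt ℝ g z
    · exact h.hasDerivAt
    · exfalso
      have := (hg' z hz).1
      rw [deriv_zero_of_not_differentiableAt h] at this
      simp at this
  have := Convex.norm_image_sub_le_of_norm_hasDerivWithin_le
    (f := g) (f' := deriv g) (s := Icc (0:ℝ) 1) (C := A)
    (fun z hz => (hdiff z hz).hasDerivWithinAt)
    (fun z hz => by rw [Real.norm_eq_abs]; exact (hg' z hz).2)
    (convex_Icc 0 1) hy hx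
  simpa [Real.norm_eq_abs] using this

lemma prod_map_lam_le (S : DDecaying d) {M : ℝ} (hM : 1 ≤ M)
    (hlam : ∀ i, 1 ≤ i → S.lam i ≤ M) (l : List ℕ) (hl : ∀ i ∈ l, 1 ≤ i) :
    (l.map S.lam).prod ≤ M ^ l.length := by
  induction l with
  | nil => simp
  | cons i l ih =>
      have hl' : ∀ j ∈ l, 1 ≤ j := fun j hj => hl j (List.mem_cons_of_mem _ hj)
      have hi : 1 ≤ i := hl i (List.mem_cons_self)
      simp only [List.map_cons, List.prod_cons, List.length_cons, pow_succ]
      rw [mul_comm (M ^ l.length) M]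
      exact mul_le_mul (hlam i hi) (ih hl') (S.prod_map_lam_nonneg l hl')
        (le_trans zero_le_one hM)

lemma lip_iter (S : DDecaying d) {m : ℕ} (hm : 1 ≤ m) {A M : ℝ} (hA0 : 0 < A)
    (hM : 1 ≤ M)
    (hcon : ∀ a : Fin m → ℕ, (∀ j, 1 ≤ a j) → ∀ x ∈ Icc (0:ℝ) 1,
      0 < |deriv ((List.ofFn fun j => S.f (a j)).foldr (· ∘ ·) id) x| ∧
        |deriv ((List.ofFn fun j => S.f (a j)).foldr (· ∘ ·) id) x| ≤ A)
    (hlam : ∀ i, 1 ≤ i → S.lam i ≤ M) :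
    ∀ n : ℕ, ∀ l : List ℕ, l.length = n → (∀ i ∈ l, 1 ≤ i) → ∀ x ∈ Icc (0:ℝ) 1,
      ∀ y ∈ Icc (0:ℝ) 1,
      |S.lcomp l x - S.lcomp l y| ≤ A ^ (n / m) * M ^ m * |x - y| := by
  intro n
  induction n using Nat.strong_induction_on with
  | _ n ih =>
    intro l hlen hl x hx y hy
    by_cases hnm : n < m
    · have h1 : |S.lcomp l x - S.lcomp l y| ≤ (l.map S.lam).prod * |x - y| :=
        S.lip_lcomp l hl hx hy
      have h2 : (l.map S.lam).prod ≤ M ^ m := by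
        refine le_trans (S.prod_map_lam_le hM hlam l hl) ?_
        rw [hlen]
        exact pow_le_pow_right₀ hM (le_of_lt hnm)
      rw [Nat.div_eq_of_lt hnm, pow_zero, one_mul]
      exact le_trans h1 (mul_le_mul_of_nonneg_right h2 (abs_nonneg _))
    · push_neg at hnm
      have hsplit : l = l.take m ++ l.drop m := (List.take_append_drop m l).symm
      have htake : (l.take m).length = m := by
        rw [List.length_take, hlen]; exact min_eq_left hnm
      have hdroplen : (l.drop m).length = n - m := by rw [List.length_drop, hlen]
      have hdl : ∀ i ∈ l.drop m, 1 ≤ i := fun i hi => hl i (List.mem_of_mem_drop hi)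
      have htl : ∀ i ∈ l.take m, 1 ≤ i := fun i hi => hl i (List.mem_of_mem_take hi)
      have hu := S.mapsTo_lcomp (l.drop m) hdl hx
      have hv := S.mapsTo_lcomp (l.drop m) hdl hy
      have hrec := ih (n - m) (by omega) (l.drop m) hdroplen hdl x hx y hy
      have hblock := S.lip_block hcon (l.take m) htl htake hu hv
      have hcompapp : ∀ z, S.lcomp l z = S.lcomp (l.take m) (S.lcomp (l.drop m) z) := by
        intro z
        conv_lhs => rw [hsplit]
        rw [lcomp_append]; rfl
      rw [hcompapp x, hcompapp y]
      have : |S.lcomp (l.take m) (S.lcomp (l.drop m) x) -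
          S.lcomp (l.take m) (S.lcomp (l.drop m) y)| ≤
          A * (A ^ ((n - m) / m) * M ^ m * |x - y|) :=
        le_trans hblock (mul_le_mul_of_nonneg_left hrec (le_of_lt hA0))
      refine le_trans this (le_of_eq ?_)
      have hdiv : n / m = (n - m) / m + 1 := Nat.div_eq_sub_div (by omega) hnm
      rw [hdiv, pow_succ]
      ring

end DDecaying

open scoped ENNReal

namespace DDecaying

lemma ofFn_eq_map_range : ∀ (n : ℕ) (a : ℕ → ℕ),
    (List.ofFn fun j : Fin n => a j) = (List.range n).map a := by
  intro n
  induction n with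
  | zero => intro a; rfl
  | succ n ih =>
      intro a
      rw [List.range_succ_eq_map, List.ofFn_succ, List.map_cons, List.map_map,
        ← ih (a ∘ Nat.succ)]
      rfl

lemma comp_eq_lcomp (S : DDecaying d) (a : ℕ → ℕ) (n : ℕ) :
    S.comp a n = S.lcomp ((List.range n).map a) := by
  simp only [DDecaying.comp, lcomp, List.map_map]
  rfl

lemma attractor_mem_image (S : DDecaying d) {k : ℕ} (hk : 1 ≤ k) (a : ℕ → ℕ)
    (ha : ∀ n, k ≤ a n) {x : ℝ} (hx : Tendsto (S.projSeq a) atTop (𝓝 x)) (n : ℕ) :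
    x ∈ S.lcomp ((List.range n).map a) '' Icc (0:ℝ) 1 := by
  set l := (List.range n).map a with hldef
  have hl : ∀ i ∈ l, 1 ≤ i := by
    intro i hi
    rw [hldef, List.mem_map] at hi
    obtain ⟨j, _, rfl⟩ := hi
    exact le_trans hk (ha j)
  have hclosed : IsClosed (S.lcomp l '' Icc (0:ℝ) 1) :=
    (isCompact_Icc.image_of_continuousOn (S.continuousOn_lcomp l hl)).isClosed
  refine hclosed.mem_of_tendsto (hx.comp (tendsto_add_atTop_nat n))
    (Filter.Eventually.of_forall ?_)
  intro p
  show S.projSeq a (p + n) ∈ _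
  rw [Nat.add_comm p n]
  have hsplit : (List.range (n + p)).map a = l ++ ((List.range p).map fun j => a (n + j)) := by
    rw [hldef, List.range_add, List.map_append, List.map_map]
    rfl
  have hl2 : ∀ i ∈ (List.range p).map fun j => a (n + j), 1 ≤ i := by
    intro i hi
    rw [List.mem_map] at hi
    obtain ⟨j, _, rfl⟩ := hi
    exact le_trans hk (ha _)
  rw [DDecaying.projSeq, comp_eq_lcomp, hsplit, lcomp_append]
  exact mem_image_of_mem _ (S.mapsTo_lcomp _ hl2 (right_mem_Icc.mpr zero_le_one))

lemma abs_sub_le_one {x y : ℝ} (hx : x ∈ Icc (0:ℝ) 1) (hy : y ∈ Icc (0:ℝ) 1) :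
    |x - y| ≤ 1 :=
  abs_sub_le_iff.mpr ⟨by linarith [hx.1, hx.2, hy.1, hy.2], by linarith [hx.1, hx.2, hy.1, hy.2]⟩

lemma diam_image_le (S : DDecaying d) (l : List ℕ) (hl : ∀ i ∈ l, 1 ≤ i) :
    Metric.diam (S.lcomp l '' Icc (0:ℝ) 1) ≤ (l.map S.lam).prod := by
  apply Metric.diam_le_of_forall_dist_le (S.prod_map_lam_nonneg l hl)
  rintro u ⟨x, hx, rfl⟩ v ⟨y, hy, rfl⟩
  rw [Real.dist_eq]
  calc |S.lcomp l x - S.lcomp l y| ≤ (l.map S.lam).prod * |x - y| := S.lip_lcomp l hl hx hy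
    _ ≤ (l.map S.lam).prod * 1 :=
        mul_le_mul_of_nonneg_left (abs_sub_le_one hx hy) (S.prod_map_lam_nonneg l hl)
    _ = (l.map S.lam).prod := mul_one _

lemma ediam_image_le (S : DDecaying d) {m : ℕ} (hm : 1 ≤ m) {A M : ℝ} (hA0 : 0 < A)
    (hM : 1 ≤ M)
    (hcon : ∀ a : Fin m → ℕ, (∀ j, 1 ≤ a j) → ∀ x ∈ Icc (0:ℝ) 1,
      0 < |deriv ((List.ofFn fun j => S.f (a j)).foldr (· ∘ ·) id) x| ∧
        |deriv ((List.ofFn fun j => S.f (a j)).foldr (· ∘ ·) id) x| ≤ A)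
    (hlam : ∀ i, 1 ≤ i → S.lam i ≤ M) (l : List ℕ) (hl : ∀ i ∈ l, 1 ≤ i) :
    EMetric.diam (S.lcomp l '' Icc (0:ℝ) 1) ≤
      ENNReal.ofReal (A ^ (l.length / m) * M ^ m) := by
  have hC0 : 0 ≤ A ^ (l.length / m) * M ^ m :=
    mul_nonneg (pow_nonneg hA0.le _) (pow_nonneg (le_trans zero_le_one hM) _)
  apply EMetric.diam_le
  rintro u ⟨x, hx, rfl⟩ v ⟨y, hy, rfl⟩
  rw [edist_dist]
  apply ENNReal.ofReal_le_ofReal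
  rw [Real.dist_eq]
  calc |S.lcomp l x - S.lcomp l y| ≤ A ^ (l.length / m) * M ^ m * |x - y| :=
        S.lip_iter hm hA0 hM hcon hlam l.length l rfl hl x hx y hy
    _ ≤ A ^ (l.length / m) * M ^ m * 1 :=
        mul_le_mul_of_nonneg_left (abs_sub_le_one hx hy) hC0
    _ = A ^ (l.length / m) * M ^ m := mul_one _

lemma summable_lam_rpow (S : DDecaying d) (s : ℝ) (hs : 1 / d < s) (k : ℕ) (hk : 1 ≤ k) :
    Summable (fun i : {i : ℕ // k ≤ i} => S.lam i ^ s) := by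
  have hd1 := S.hd
  have hd0 : (0:ℝ) < d := lt_trans one_pos hd1
  have hs0 : 0 < s := lt_trans (by positivity) hs
  have hsd : 1 < s * d := by
    rw [div_lt_iff₀ hd0] at hs
    exact hs
  have h1s : 1 / s < d := by
    rw [div_lt_iff₀ hs0]
    nlinarith
  set ε := (d - 1 / s) / 2 with hεdef
  have hε : 0 < ε := by
    rw [hεdef]
    have := sub_pos.mpr h1s
    linarith
  obtain ⟨C₁, hC₁, C₂, hC₂, hbd⟩ := S.decay ε hε
  set q := s * (d - ε) with hqdef
  have hsinv : s * (1 / s) = 1 := by field_simp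
  have hq1 : 1 < q := by
    rw [hqdef, hεdef]
    nlinarith
  have hsum' : Summable (fun i : ℕ => C₂ ^ s * (1 / (i : ℝ) ^ q)) :=
    (Real.summable_one_div_nat_rpow.mpr hq1).mul_left _
  have hsub : Summable (fun i : {i : ℕ // k ≤ i} => C₂ ^ s * (1 / ((i : ℕ) : ℝ) ^ q)) :=
    hsum'.subtype {i : ℕ | k ≤ i}
  refine Summable.of_nonneg_of_le
    (fun i => Real.rpow_nonneg (S.lam_nonneg i (le_trans hk i.2)) s) ?_ hsub
  intro i
  have hi1 : 1 ≤ (i : ℕ) := le_trans hk i.2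
  have hip : (0:ℝ) < ((i : ℕ) : ℝ) := by exact_mod_cast Nat.lt_of_lt_of_le Nat.zero_lt_one hi1
  have hlam := (hbd i hi1).2
  have hpow_pos : (0:ℝ) < ((i : ℕ) : ℝ) ^ (d - ε) := Real.rpow_pos_of_pos hip _
  calc S.lam i ^ s ≤ (C₂ / ((i : ℕ) : ℝ) ^ (d - ε)) ^ s :=
        Real.rpow_le_rpow (S.lam_nonneg i hi1) hlam hs0.le
    _ = C₂ ^ s / (((i : ℕ) : ℝ) ^ (d - ε)) ^ s := Real.div_rpow hC₂.le hpow_pos.le s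
    _ = C₂ ^ s / ((i : ℕ) : ℝ) ^ q := by
        rw [← Real.rpow_mul hip.le, hqdef, mul_comm s (d - ε)]
    _ = C₂ ^ s * (1 / ((i : ℕ) : ℝ) ^ q) := by rw [mul_one_div]

lemma tsum_pi_pow {β : Type*} (g : β → ℝ≥0∞) (n : ℕ) :
    ∑' b : Fin n → β, ∏ j, g (b j) = (∑' c, g c) ^ n := by
  induction n with
  | zero =>
    rw [pow_zero]
    rw [tsum_eq_single (fun j => j.elim0) fun b hb => absurd (Subsingleton.elim b _) hb]
    simp
  | succ n ih =>
    have key := (Fin.consEquiv fun _ : Fin (n + 1) => β).tsum_eq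
      (fun b : Fin (n + 1) → β => ∏ j, g (b j))
    rw [← key]
    have hterm : ∀ p : β × (Fin n → β),
        (∏ j : Fin (n + 1), g (((Fin.consEquiv fun _ : Fin (n + 1) => β) p) j))
          = g p.1 * ∏ j : Fin n, g (p.2 j) := by
      intro p
      rw [Fin.prod_univ_succ]
      simp [Fin.consEquiv]
    simp_rw [hterm]
    rw [ENNReal.tsum_prod']
    simp_rw [ENNReal.tsum_mul_left]
    rw [ENNReal.tsum_mul_right, ih, pow_succ']

end DDecaying

namespace DDecaying

lemma ediam_image_le_prod (S : DDecaying d) (l : List ℕ) (hl : ∀ i ∈ l, 1 ≤ i) :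
    EMetric.diam (S.lcomp l '' Icc (0:ℝ) 1) ≤ ENNReal.ofReal (l.map S.lam).prod := by
  apply EMetric.diam_le
  rintro u ⟨x, hx, rfl⟩ v ⟨y, hy, rfl⟩
  rw [edist_dist]
  apply ENNReal.ofReal_le_ofReal
  rw [Real.dist_eq]
  calc |S.lcomp l x - S.lcomp l y| ≤ (l.map S.lam).prod * |x - y| := S.lip_lcomp l hl hx hy
    _ ≤ (l.map S.lam).prod * 1 :=
        mul_le_mul_of_nonneg_left (abs_sub_le_one hx hy) (S.prod_map_lam_nonneg l hl)
    _ = (l.map S.lam).prod := mul_one _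

end DDecaying

/-- If `s > 1/d` and `k` is such that `∑_{i ≥ k} λ_i^s ≤ 1`, then for every `n ≥ 1` the sum
over all words `(a_1, …, a_n)` with digits `≥ k` of `|f_{a_1}∘⋯∘f_{a_n}([0,1])|^s` is at
most `1`; consequently `dim_H Λ_k ≤ s`. -/
theorem dimH_attractor_upper (d : ℝ) (S : DDecaying d) (s : ℝ) (hs : 1 / d < s)
    (k : ℕ) (hk : 1 ≤ k)
    (hsum : ∑' i : {i : ℕ // k ≤ i}, S.lam i ^ s ≤ 1) :
    (∀ n : ℕ, 1 ≤ n →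
      ∑' a : {a : Fin n → ℕ // ∀ j, k ≤ a j},
        Metric.diam (((List.ofFn fun j => S.f (a.1 j)).foldr (· ∘ ·) id) '' Icc (0:ℝ) 1) ^ s
          ≤ 1) ∧
    dimH (S.attractor k) ≤ ENNReal.ofReal s := by
  obtain ⟨m, hm, A, hA0, hA1, hcon⟩ := S.contract
  have hd0 : (0:ℝ) < d := lt_trans one_pos S.hd
  have hs0 : 0 < s := lt_trans (by positivity) hs
  -- a uniform bound on `lam`
  obtain ⟨C₁, hC₁, C₂, hC₂, hbd⟩ := S.decay ((d - 1) / 2) (by linarith [S.hd])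
  set M : ℝ := max 1 C₂ with hMdef
  have hM : 1 ≤ M := le_max_left _ _
  have hlamM : ∀ i, 1 ≤ i → S.lam i ≤ M := by
    intro i hi
    have hi1 : (1:ℝ) ≤ (i : ℝ) := by exact_mod_cast hi
    have hpow : (1:ℝ) ≤ (i : ℝ) ^ (d - (d - 1) / 2) :=
      Real.one_le_rpow hi1 (by linarith [S.hd])
    calc S.lam i ≤ C₂ / (i : ℝ) ^ (d - (d - 1) / 2) := (hbd i hi).2
      _ ≤ C₂ / 1 := div_le_div_of_nonneg_left hC₂.le one_pos hpow
      _ = C₂ := div_one _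
      _ ≤ M := le_max_right _ _
  -- the key ENNReal bound
  have hlam_nn : ∀ i : {i : ℕ // k ≤ i}, 0 ≤ S.lam i ^ s :=
    fun i => Real.rpow_nonneg (S.lam_nonneg i (le_trans hk i.2)) s
  set T : ℝ≥0∞ := ∑' i : {i : ℕ // k ≤ i}, ENNReal.ofReal (S.lam i ^ s) with hTdef
  have hT : T ≤ 1 := by
    rw [hTdef, ← ENNReal.ofReal_tsum_of_nonneg hlam_nn (S.summable_lam_rpow s hs k hk),
      ← ENNReal.ofReal_one]
    exact ENNReal.ofReal_le_ofReal hsum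
  have hKey : ∀ n : ℕ,
      ∑' w : {a : Fin n → ℕ // ∀ j, k ≤ a j}, ∏ j, ENNReal.ofReal (S.lam (w.1 j) ^ s)
        ≤ 1 := by
    intro n
    have hE : ∀ b : Fin n → {i : ℕ // k ≤ i},
        (∏ j, ENNReal.ofReal (S.lam (((fun b => (⟨fun j => (b j).1, fun j => (b j).2⟩ :
          {a : Fin n → ℕ // ∀ j, k ≤ a j})) b).1 j) ^ s))
          = ∏ j, ENNReal.ofReal (S.lam (b j) ^ s) := fun b => rfl
    have hEq := Equiv.tsum_eq
      (⟨fun b : Fin n → {i : ℕ // k ≤ i} => (⟨fun j => (b j).1, fun j => (b j).2⟩ :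
          {a : Fin n → ℕ // ∀ j, k ≤ a j}),
        fun a => fun j => ⟨a.1 j, a.2 j⟩, fun b => rfl, fun a => rfl⟩ :
        (Fin n → {i : ℕ // k ≤ i}) ≃ {a : Fin n → ℕ // ∀ j, k ≤ a j})
      (fun w : {a : Fin n → ℕ // ∀ j, k ≤ a j} => ∏ j, ENNReal.ofReal (S.lam (w.1 j) ^ s))
    rw [← hEq]
    calc ∑' b : Fin n → {i : ℕ // k ≤ i}, ∏ j, ENNReal.ofReal (S.lam (b j) ^ s)
        = T ^ n := DDecaying.tsum_pi_pow (fun c : {i : ℕ // k ≤ i} =>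
          ENNReal.ofReal (S.lam c ^ s)) n
      _ ≤ 1 := pow_le_one' hT n
  -- per-word estimates
  have hword : ∀ n : ℕ, ∀ w : {a : Fin n → ℕ // ∀ j, k ≤ a j},
      (∀ i ∈ List.ofFn w.1, 1 ≤ i) ∧
      ((List.ofFn fun j => S.f (w.1 j)).foldr (· ∘ ·) id = S.lcomp (List.ofFn w.1)) ∧
      ENNReal.ofReal (((List.ofFn w.1).map S.lam).prod ^ s)
        = ∏ j, ENNReal.ofReal (S.lam (w.1 j) ^ s) := by
    intro n w
    have h1 : ∀ i ∈ List.ofFn w.1, 1 ≤ i := by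
      intro i hi
      rw [List.mem_ofFn] at hi
      obtain ⟨j, rfl⟩ := hi
      exact le_trans hk (w.2 j)
    refine ⟨h1, ?_, ?_⟩
    · rw [DDecaying.lcomp, List.map_ofFn]
      rfl
    · rw [List.map_ofFn]
      show ENNReal.ofReal ((List.ofFn fun j => S.lam (w.1 j)).prod ^ s) = _
      rw [List.prod_ofFn (f := fun j => S.lam (w.1 j)),
        ← Real.finset_prod_rpow Finset.univ _ (fun j _ => S.lam_nonneg _ (le_trans hk (w.2 j))) s,
        ENNReal.ofReal_prod_of_nonneg (fun j _ =>
          Real.rpow_nonneg (S.lam_nonneg _ (le_trans hk (w.2 j))) s)]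
  constructor
  · -- part 1 : the real sums are at most 1
    intro n _
    apply tsum_le_of_sum_le' zero_le_one
    intro fs
    rw [← ENNReal.ofReal_le_ofReal_iff zero_le_one]
    calc ENNReal.ofReal (∑ a ∈ fs,
          Metric.diam (((List.ofFn fun j => S.f (a.1 j)).foldr (· ∘ ·) id) '' Icc (0:ℝ) 1) ^ s)
        = ∑ a ∈ fs, ENNReal.ofReal
            (Metric.diam (((List.ofFn fun j => S.f (a.1 j)).foldr (· ∘ ·) id) '' Icc (0:ℝ) 1) ^ s) :=
          ENNReal.ofReal_sum_of_nonneg fun a _ => Real.rpow_nonneg Metric.diam_nonneg s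
      _ ≤ ∑ a ∈ fs, ∏ j, ENNReal.ofReal (S.lam (a.1 j) ^ s) := by
          refine Finset.sum_le_sum fun a _ => ?_
          obtain ⟨h1, h2, h3⟩ := hword n a
          rw [h2, ← h3]
          apply ENNReal.ofReal_le_ofReal
          exact Real.rpow_le_rpow Metric.diam_nonneg
            (S.diam_image_le (List.ofFn a.1) h1) hs0.le
      _ ≤ ∑' a : {a : Fin n → ℕ // ∀ j, k ≤ a j}, ∏ j, ENNReal.ofReal (S.lam (a.1 j) ^ s) :=
          ENNReal.sum_le_tsum fs
      _ ≤ 1 := hKey n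
      _ = ENNReal.ofReal 1 := ENNReal.ofReal_one.symm
  · -- part 2 : the Hausdorff dimension bound
    set t : ∀ n : ℕ, {a : Fin n → ℕ // ∀ j, k ≤ a j} → Set ℝ :=
      fun n w => S.lcomp (List.ofFn w.1) '' Icc (0:ℝ) 1 with htdef
    set r : ℕ → ℝ≥0∞ := fun n => ENNReal.ofReal (A ^ (n / m) * M ^ m) with hrdef
    have hdiv : Tendsto (fun n : ℕ => n / m) atTop atTop :=
      tendsto_atTop_atTop.mpr fun b =>
        ⟨b * m, fun n hn => (Nat.le_div_iff_mul_le (by omega)).mpr hn⟩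
    have h1 : Tendsto (fun n : ℕ => A ^ (n / m)) atTop (𝓝 0) :=
      (tendsto_pow_atTop_nhds_zero_of_lt_one hA0.le hA1).comp hdiv
    have h2 : Tendsto (fun n : ℕ => A ^ (n / m) * M ^ m) atTop (𝓝 0) := by
      simpa using h1.mul_const (M ^ m)
    have hr : Tendsto r atTop (𝓝 0) := by
      rw [hrdef, ← ENNReal.ofReal_zero]
      exact (ENNReal.continuous_ofReal.tendsto 0).comp h2
    have ht : ∀ n : ℕ, ∀ w : {a : Fin n → ℕ // ∀ j, k ≤ a j},
        EMetric.diam (t n w) ≤ r n := by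
      intro n w
      have := S.ediam_image_le hm hA0 hM hcon hlamM (List.ofFn w.1) (hword n w).1
      rwa [List.length_ofFn] at this
    have hst : ∀ n : ℕ, S.attractor k ⊆ ⋃ w, t n w := by
      intro n x hx
      obtain ⟨a, ha, htend⟩ := hx
      refine mem_iUnion.mpr ⟨⟨fun j => a j, fun j => ha j⟩, ?_⟩
      show x ∈ S.lcomp (List.ofFn fun j : Fin n => a j) '' Icc (0:ℝ) 1
      rw [DDecaying.ofFn_eq_map_range]
      exact S.attractor_mem_image hk a ha htend n
    have hμ := Measure.hausdorffMeasure_le_liminf_tsum s (S.attractor k) r hr t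
      (Filter.Eventually.of_forall ht) (Filter.Eventually.of_forall hst)
    have hμ1 : μH[s] (S.attractor k) ≤ 1 := by
      refine le_trans hμ ?_
      have hbound : ∀ n : ℕ, ∑' w : {a : Fin n → ℕ // ∀ j, k ≤ a j},
          EMetric.diam (t n w) ^ s ≤ 1 := by
        intro n
        refine le_trans (ENNReal.tsum_le_tsum fun w => ?_) (hKey n)
        obtain ⟨h1, _, h3⟩ := hword n w
        calc EMetric.diam (t n w) ^ s
            ≤ ENNReal.ofReal ((List.ofFn w.1).map S.lam).prod ^ s :=
              ENNReal.rpow_le_rpow (S.ediam_image_le_prod (List.ofFn w.1) h1) hs0.le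
          _ = ENNReal.ofReal (((List.ofFn w.1).map S.lam).prod ^ s) :=
              ENNReal.ofReal_rpow_of_nonneg (S.prod_map_lam_nonneg _ h1) hs0.le
          _ = ∏ j, ENNReal.ofReal (S.lam (w.1 j) ^ s) := h3
      calc Filter.liminf (fun n => ∑' w : {a : Fin n → ℕ // ∀ j, k ≤ a j},
            EMetric.diam (t n w) ^ s) atTop
          ≤ Filter.liminf (fun _ : ℕ => (1 : ℝ≥0∞)) atTop :=
            Filter.liminf_le_liminf (Filter.Eventually.of_forall hbound)
        _ = 1 := Filter.liminf_const 1
    have hne : μH[((s.toNNReal : NNReal) : ℝ)] (S.attractor k) ≠ ⊤ := by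
      rw [Real.coe_toNNReal s hs0.le]
      exact ne_top_of_le_ne_top ENNReal.one_ne_top hμ1
    have hfin := dimH_le_of_hausdorffMeasure_ne_top hne
    rwa [show ENNReal.ofReal s = ((s.toNNReal : NNReal) : ℝ≥0∞) from rfl]
end

section
/- Let {f_i} be a d-decaying system and for s < 1/d choose m, k with Σ_{i=k+1}^m ξ_i^s ≥ 1, where ξ_i = inf_x |f_i'(x)|. Then the attractor Λ_{k,m} of the finite iterated function system {f_k, ..., f_m} satisfies dim_H Λ_{k,m} ≥ s_m, where s_m solves Σ_{i=k+1}^m ξ_i^{s_m} = 1; in particular dim_H Λ_k ≥ 1/d for every k. -/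
open Set Filter Topology MeasureTheory

variable {d : ℝ}

open scoped ENNReal NNReal

namespace DDHelp

variable (S : DDecaying d)

/-- composition of the maps indexed by a word -/
def compL (w : List ℕ) : ℝ → ℝ := (w.map S.f).foldr (· ∘ ·) id

@[simp] lemma compL_nil : compL S [] = id := rfl

lemma compL_cons (i : ℕ) (w : List ℕ) : compL S (i :: w) = S.f i ∘ compL S w := rfl

lemma compL_append (w₁ w₂ : List ℕ) :
    compL S (w₁ ++ w₂) = compL S w₁ ∘ compL S w₂ := by
  induction w₁ with
  | nil => rfl
  | cons i w ih => simp [compL_cons, ih]; rfl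

def GoodW (w : List ℕ) : Prop := ∀ i ∈ w, 1 ≤ i

lemma mapsTo_compL {w : List ℕ} (hw : GoodW w) :
    MapsTo (compL S w) (Icc (0:ℝ) 1) (Icc (0:ℝ) 1) := by
  induction w with
  | nil => simpa [compL] using mapsTo_id _
  | cons i w ih =>
      rw [compL_cons]
      exact (S.maps i (hw i (by simp))).comp (ih fun j hj => hw j (by simp [hj]))

lemma continuousOn_f {i : ℕ} (hi : 1 ≤ i) : ContinuousOn (S.f i) (Icc (0:ℝ) 1) :=
  fun x hx => ((S.hderiv i hi x hx).differentiableAt.continuousAt).continuousWithinAt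

/-- MVT lower bound for a single map -/
lemma mvt_single {i : ℕ} (hi : 1 ≤ i) {u v : ℝ} (hu : u ∈ Icc (0:ℝ) 1)
    (hv : v ∈ Icc (0:ℝ) 1) : S.ξ i * |u - v| ≤ |S.f i u - S.f i v| := by
  rcases eq_or_ne u v with h | h
  · simp [h]
  have key : ∀ a b : ℝ, a < b → a ∈ Icc (0:ℝ) 1 → b ∈ Icc (0:ℝ) 1 →
      S.ξ i * |a - b| ≤ |S.f i a - S.f i b| := by
    intro a b hab ha hb
    have ⟨c, hc, hslope⟩ := exists_hasDerivAt_eq_slope (S.f i) (S.f' i) hab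
      ((continuousOn_f S hi).mono (Icc_subset_Icc ha.1 hb.2))
      (fun x hx => S.hderiv i hi x ⟨ha.1.trans hx.1.le, hx.2.le.trans hb.2⟩)
    have hcI : c ∈ Icc (0:ℝ) 1 := ⟨ha.1.trans hc.1.le, hc.2.le.trans hb.2⟩
    have hd := (S.derivBounds i hi c hcI).1
    have hba : b - a ≠ 0 := by linarith
    have heq : S.f i b - S.f i a = S.f' i c * (b - a) := by
      field_simp at hslope; linarith [hslope]
    have : |S.f i a - S.f i b| = |S.f' i c| * |a - b| := by
      rw [abs_sub_comm, heq, abs_mul, abs_sub_comm b a]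
    rw [this]
    exact mul_le_mul_of_nonneg_right hd (abs_nonneg _)
  rcases lt_or_gt_of_ne h with h' | h'
  · exact key u v h' hu hv
  · rw [abs_sub_comm, abs_sub_comm (S.f i u)]; exact key v u h' hv hu

def xiProd (w : List ℕ) : ℝ := (w.map S.ξ).prod

@[simp] lemma xiProd_nil : xiProd S [] = 1 := rfl

lemma xiProd_cons (i : ℕ) (w : List ℕ) : xiProd S (i :: w) = S.ξ i * xiProd S w := by
  simp [xiProd]

lemma xiProd_append (w₁ w₂ : List ℕ) :
    xiProd S (w₁ ++ w₂) = xiProd S w₁ * xiProd S w₂ := by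
  simp [xiProd]

lemma xi_pos {i : ℕ} (hi : 1 ≤ i) : 0 < S.ξ i := by
  obtain ⟨C₁, hC₁, C₂, hC₂, h⟩ := S.decay 1 one_pos
  refine lt_of_lt_of_le ?_ (h i hi).1
  have : (0:ℝ) < (i:ℝ) ^ (d + 1) := by
    apply Real.rpow_pos_of_pos
    exact_mod_cast hi
  positivity

lemma xiProd_pos {w : List ℕ} (hw : GoodW w) : 0 < xiProd S w := by
  induction w with
  | nil => norm_num
  | cons i w ih =>
      rw [xiProd_cons]
      exact mul_pos (xi_pos S (hw i (by simp))) (ih fun j hj => hw j (by simp [hj]))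

lemma mvt_lower {w : List ℕ} (hw : GoodW w) {u v : ℝ} (hu : u ∈ Icc (0:ℝ) 1)
    (hv : v ∈ Icc (0:ℝ) 1) :
    xiProd S w * |u - v| ≤ |compL S w u - compL S w v| := by
  induction w with
  | nil => simp
  | cons i w ih =>
      have hw' : GoodW w := fun j hj => hw j (by simp [hj])
      have h1 : S.ξ i * |compL S w u - compL S w v| ≤
          |S.f i (compL S w u) - S.f i (compL S w v)| :=
        mvt_single S (hw i (by simp)) (mapsTo_compL S hw' hu) (mapsTo_compL S hw' hv)
      rw [compL_cons, xiProd_cons]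
      calc S.ξ i * xiProd S w * |u - v| = S.ξ i * (xiProd S w * |u - v|) := by ring
        _ ≤ S.ξ i * |compL S w u - compL S w v| :=
            mul_le_mul_of_nonneg_left (ih hw') (xi_pos S (hw i (by simp))).le
        _ ≤ _ := h1

lemma injOn_compL {w : List ℕ} (hw : GoodW w) : InjOn (compL S w) (Icc (0:ℝ) 1) := by
  intro u hu v hv h
  by_contra hne
  have := mvt_lower S hw hu hv
  rw [h, sub_self, abs_zero] at this
  have h1 : 0 < xiProd S w * |u - v| :=
    mul_pos (xiProd_pos S hw) (abs_pos.2 (sub_ne_zero.2 hne))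
  linarith

section Contract

variable {m₀ : ℕ} {A : ℝ}

/-- hypothesis bundle from `S.contract` -/
def CHyp (S : DDecaying d) (m₀ : ℕ) (A : ℝ) : Prop :=
  1 ≤ m₀ ∧ 0 < A ∧ A < 1 ∧
    ∀ a : Fin m₀ → ℕ, (∀ j, 1 ≤ a j) → ∀ x ∈ Icc (0:ℝ) 1,
      0 < |deriv ((List.ofFn fun j => S.f (a j)).foldr (· ∘ ·) id) x| ∧
        |deriv ((List.ofFn fun j => S.f (a j)).foldr (· ∘ ·) id) x| ≤ A

lemma block_upper (hC : CHyp S m₀ A) {w : List ℕ} (hw : GoodW w) (hlen : w.length = m₀)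
    {u v : ℝ} (hu : u ∈ Icc (0:ℝ) 1) (hv : v ∈ Icc (0:ℝ) 1) :
    |compL S w u - compL S w v| ≤ A * |u - v| := by
  obtain ⟨hm₀, hA0, hA1, hcontr⟩ := hC
  set aa : Fin m₀ → ℕ := fun j => w.get (Fin.cast hlen.symm j) with ha
  have hofn : List.ofFn aa = w := by
    apply List.ext_get (by simp [hlen])
    intro n h1 h2
    simp [ha]
  have hfn : (List.ofFn fun j => S.f (aa j)) = w.map S.f := by
    rw [← hofn, List.map_ofFn]
    rfl
  have hkey := hcontr aa (fun j => hw _ (by rw [← hofn]; exact List.mem_ofFn.2 ⟨j, rfl⟩))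
  rw [hfn] at hkey
  -- now hkey is about deriv (compL S w)
  have hkey' : ∀ x ∈ Icc (0:ℝ) 1, 0 < |deriv (compL S w) x| ∧ |deriv (compL S w) x| ≤ A :=
    hkey
  have hdiff : ∀ x ∈ Icc (0:ℝ) 1, DifferentiableAt ℝ (compL S w) x := by
    intro x hx
    refine differentiableAt_of_deriv_ne_zero (fun h => ?_)
    have h0 := (hkey' x hx).1
    rw [h] at h0; simp at h0
  rcases eq_or_ne u v with h | h
  · simp [h]
  have key : ∀ a b : ℝ, a < b → a ∈ Icc (0:ℝ) 1 → b ∈ Icc (0:ℝ) 1 →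
      |compL S w a - compL S w b| ≤ A * |a - b| := by
    intro a b hab haI hbI
    have hsub : Icc a b ⊆ Icc (0:ℝ) 1 := Icc_subset_Icc haI.1 hbI.2
    have ⟨c, hc, hslope⟩ := exists_hasDerivAt_eq_slope (compL S w) (deriv (compL S w)) hab
      (fun x hx => ((hdiff x (hsub hx)).continuousAt).continuousWithinAt)
      (fun x hx => (hdiff x (hsub ⟨hx.1.le, hx.2.le⟩)).hasDerivAt)
    have hcI : c ∈ Icc (0:ℝ) 1 := hsub ⟨hc.1.le, hc.2.le⟩
    have hbound := (hkey' c hcI).2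
    have heq : compL S w b - compL S w a = deriv (compL S w) c * (b - a) := by
      have hba : b - a ≠ 0 := by linarith
      field_simp at hslope; linarith [hslope]
    have : |compL S w a - compL S w b| = |deriv (compL S w) c| * |a - b| := by
      rw [abs_sub_comm, heq, abs_mul, abs_sub_comm b a]
    rw [this]
    exact mul_le_mul_of_nonneg_right hbound (abs_nonneg _)
  rcases lt_or_gt_of_ne h with h' | h'
  · exact key u v h' hu hv
  · rw [abs_sub_comm, abs_sub_comm u v]; exact key v u h' hv hu

lemma diam_bound (hC : CHyp S m₀ A) : ∀ n (w : List ℕ), w.length = n → GoodW w →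
    ∀ u v : ℝ, u ∈ Icc (0:ℝ) 1 → v ∈ Icc (0:ℝ) 1 →
    |compL S w u - compL S w v| ≤ A ^ (w.length / m₀) := by
  intro n
  induction n using Nat.strong_induction_on with
  | _ n ih =>
    intro w hlen hw u v hu hv
    obtain ⟨hm₀, hA0, hA1, -⟩ := id hC
    by_cases hn : n < m₀
    · have : w.length / m₀ = 0 := Nat.div_eq_of_lt (hlen ▸ hn)
      rw [this, pow_zero]
      have h1 := mapsTo_compL S hw hu
      have h2 := mapsTo_compL S hw hv
      rw [abs_le]; constructor <;> [nlinarith [h1.1, h1.2, h2.1, h2.2]; nlinarith [h1.1, h1.2, h2.1, h2.2]]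
    · push_neg at hn
      have hsplit : w = w.take m₀ ++ w.drop m₀ := (List.take_append_drop _ _).symm
      have hlen1 : (w.take m₀).length = m₀ := by
        rw [List.length_take]; omega
      have hw1 : GoodW (w.take m₀) := fun i hi => hw i (List.mem_of_mem_take hi)
      have hw2 : GoodW (w.drop m₀) := fun i hi => hw i (List.mem_of_mem_drop hi)
      have hlen2 : (w.drop m₀).length = n - m₀ := by
        rw [List.length_drop]; omega
      have hu2 := mapsTo_compL S hw2 hu
      have hv2 := mapsTo_compL S hw2 hv
      have hblock := block_upper S hC hw1 hlen1 hu2 hv2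
      have hih := ih (n - m₀) (by omega) (w.drop m₀) hlen2 hw2 u v hu hv
      rw [hlen2] at hih
      have : |compL S w u - compL S w v| =
          |compL S (w.take m₀) (compL S (w.drop m₀) u) - compL S (w.take m₀) (compL S (w.drop m₀) v)| := by
        conv_lhs => rw [hsplit]
        rw [compL_append]; rfl
      rw [this, hlen]
      calc |compL S (w.take m₀) (compL S (w.drop m₀) u) - compL S (w.take m₀) (compL S (w.drop m₀) v)|
          ≤ A * |compL S (w.drop m₀) u - compL S (w.drop m₀) v| := hblock
        _ ≤ A * A ^ ((n - m₀) / m₀) := mul_le_mul_of_nonneg_left hih hA0.le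
        _ = A ^ ((n - m₀) / m₀ + 1) := by ring
        _ = A ^ (n / m₀) := by
            congr 1
            rw [Nat.div_eq_sub_div (by omega) hn]

lemma xi_lt_one (hC : CHyp S m₀ A) {i : ℕ} (hi : 1 ≤ i) : S.ξ i < 1 := by
  obtain ⟨hm₀, hA0, hA1, -⟩ := id hC
  by_contra h
  push_neg at h
  set w := List.replicate m₀ i with hwdef
  have hw : GoodW w := fun j hj => by
    rw [List.eq_of_mem_replicate hj]; exact hi
  have hxi : xiProd S w = S.ξ i ^ m₀ := by
    simp [xiProd, hwdef, List.map_replicate, List.prod_replicate]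
  have h1 : (1:ℝ) ∈ Icc (0:ℝ) 1 := by norm_num
  have h0 : (0:ℝ) ∈ Icc (0:ℝ) 1 := by norm_num
  have hlow := mvt_lower S hw h1 h0
  have hup := block_upper S hC hw (by simp [hwdef]) h1 h0
  rw [hxi] at hlow
  have : (1:ℝ) ≤ S.ξ i ^ m₀ := one_le_pow₀ h
  simp only [sub_zero, abs_one, mul_one] at hlow hup
  linarith

end Contract

section Conv

variable {m₀ : ℕ} {A : ℝ}

lemma comp_eq_compL (a : ℕ → ℕ) (n : ℕ) :
    S.comp a n = compL S ((List.range n).map a) := by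
  unfold DDecaying.comp compL
  rw [List.map_map]
  rfl

lemma range_map_split (a : ℕ → ℕ) {n N : ℕ} (h : n ≤ N) :
    (List.range N).map a
      = (List.range n).map a ++ (List.range (N - n)).map (fun j => a (n + j)) := by
  conv_lhs => rw [show N = n + (N - n) by omega]
  rw [List.range_add, List.map_append, List.map_map]
  rfl

lemma goodW_range_map {a : ℕ → ℕ} (ha : ∀ j, 1 ≤ a j) (n : ℕ) :
    GoodW ((List.range n).map a) := by
  intro i hi
  obtain ⟨j, -, rfl⟩ := List.mem_map.1 hi
  exact ha j

lemma projSeq_mem {a : ℕ → ℕ} (ha : ∀ j, 1 ≤ a j) {n N : ℕ} (h : n ≤ N) :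
    S.projSeq a N ∈ compL S ((List.range n).map a) '' Icc (0:ℝ) 1 := by
  have : S.projSeq a N = compL S ((List.range n).map a)
      (compL S ((List.range (N - n)).map (fun j => a (n + j))) 1) := by
    unfold DDecaying.projSeq
    rw [comp_eq_compL, range_map_split a h, compL_append]
    rfl
  rw [this]
  exact mem_image_of_mem _
    (mapsTo_compL S (goodW_range_map (fun j => ha _) _) (by norm_num))

lemma dist_projSeq (hC : CHyp S m₀ A) {a : ℕ → ℕ} (ha : ∀ j, 1 ≤ a j)
    {n N₁ N₂ : ℕ} (h1 : n ≤ N₁) (h2 : n ≤ N₂) :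
    dist (S.projSeq a N₁) (S.projSeq a N₂) ≤ A ^ (n / m₀) := by
  obtain ⟨u, hu, heq1⟩ := projSeq_mem S ha h1
  obtain ⟨v, hv, heq2⟩ := projSeq_mem S ha h2
  rw [Real.dist_eq, ← heq1, ← heq2]
  have := diam_bound S hC ((List.range n).map a).length ((List.range n).map a) rfl
    (goodW_range_map ha n) u v hu hv
  simpa using this

lemma tendsto_pow_div (hC : CHyp S m₀ A) :
    Tendsto (fun n : ℕ => A ^ (n / m₀)) atTop (𝓝 0) := by
  obtain ⟨hm₀, hA0, hA1, -⟩ := id hC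
  have h2 : Tendsto (fun n : ℕ => n / m₀) atTop atTop := by
    apply tendsto_atTop_atTop.2
    intro b
    exact ⟨b * m₀, fun n hn => Nat.le_div_iff_mul_le (by omega) |>.2 hn⟩
  exact (tendsto_pow_atTop_nhds_zero_of_lt_one hA0.le hA1).comp h2

lemma exists_lim (hC : CHyp S m₀ A) {a : ℕ → ℕ} (ha : ∀ j, 1 ≤ a j) :
    ∃ x, Tendsto (S.projSeq a) atTop (𝓝 x) := by
  apply cauchySeq_tendsto_of_complete
  exact cauchySeq_of_le_tendsto_0 (fun n => A ^ (n / m₀))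
    (fun n N M h1 h2 => dist_projSeq S hC ha h1 h2) (tendsto_pow_div S hC)

lemma continuousOn_compL {w : List ℕ} (hw : GoodW w) :
    ContinuousOn (compL S w) (Icc (0:ℝ) 1) := by
  induction w with
  | nil => exact continuousOn_id
  | cons i w ih =>
      rw [compL_cons]
      exact (continuousOn_f S (hw i (by simp))).comp
        (ih fun j hj => hw j (by simp [hj]))
        (mapsTo_compL S fun j hj => hw j (by simp [hj]))

lemma isCompact_cyl {w : List ℕ} (hw : GoodW w) :
    IsCompact (compL S w '' Icc (0:ℝ) 1) :=
  isCompact_Icc.image_of_continuousOn (continuousOn_compL S hw)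

lemma lim_mem_cyl (hC : CHyp S m₀ A) {a : ℕ → ℕ} (ha : ∀ j, 1 ≤ a j) {x : ℝ}
    (hx : Tendsto (S.projSeq a) atTop (𝓝 x)) (n : ℕ) :
    x ∈ compL S ((List.range n).map a) '' Icc (0:ℝ) 1 := by
  have hcl : IsClosed (compL S ((List.range n).map a) '' Icc (0:ℝ) 1) :=
    (isCompact_cyl S (goodW_range_map ha n)).isClosed
  exact hcl.mem_of_tendsto hx (eventually_atTop.2 ⟨n, fun N hN => projSeq_mem S ha hN⟩)

/-- The cylinder of a word is a closed interval of length at least `xiProd`. -/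
lemma cyl_structure {w : List ℕ} (hw : GoodW w) :
    ∃ α β : ℝ, α ≤ β ∧ compL S w '' Icc (0:ℝ) 1 = Icc α β ∧
      xiProd S w ≤ β - α ∧ 0 ≤ α ∧ β ≤ 1 := by
  set K := compL S w '' Icc (0:ℝ) 1 with hK
  have hco : IsCompact K := isCompact_cyl S hw
  have hconn : IsConnected K :=
    (isConnected_Icc (by norm_num)).image _ (continuousOn_compL S hw)
  have heq : K = Icc (sInf K) (sSup K) := eq_Icc_of_connected_compact hconn hco
  have hsub : K ⊆ Icc (0:ℝ) 1 := image_subset_iff.2 (mapsTo_compL S hw)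
  have h0 : compL S w 0 ∈ K := mem_image_of_mem _ (by norm_num)
  have h1 : compL S w 1 ∈ K := mem_image_of_mem _ (by norm_num)
  have hne : K.Nonempty := ⟨_, h0⟩
  have hInf := hco.sInf_mem hne
  have hSup := hco.sSup_mem hne
  refine ⟨sInf K, sSup K, ?_, heq, ?_, (hsub hInf).1, (hsub hSup).2⟩
  · exact csInf_le_csSup hne hco.bddBelow hco.bddAbove
  · have := mvt_lower S hw (show (1:ℝ) ∈ Icc (0:ℝ) 1 by norm_num)
      (show (0:ℝ) ∈ Icc (0:ℝ) 1 by norm_num)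
    simp only [sub_zero, abs_one, mul_one] at this
    have h0' : compL S w 0 ∈ Icc (sInf K) (sSup K) := heq ▸ h0
    have h1' : compL S w 1 ∈ Icc (sInf K) (sSup K) := heq ▸ h1
    have habs : |compL S w 1 - compL S w 0| ≤ sSup K - sInf K := by
      rw [abs_le]
      constructor <;> [linarith [h0'.2, h1'.1]; linarith [h0'.1, h1'.2]]
    linarith

/-- Image of the open unit interval stays in the open unit interval. -/
lemma image_Ioo_single {i : ℕ} (hi : 1 ≤ i) :
    S.f i '' Ioo (0:ℝ) 1 ⊆ Ioo (0:ℝ) 1 := by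
  have hcont := continuousOn_f S hi
  have hinj : InjOn (S.f i) (Icc (0:ℝ) 1) := by
    have : GoodW [i] := by intro j hj; simp at hj; omega
    have h := injOn_compL S this
    simpa [compL_cons] using h
  have h0 : S.f i 0 ∈ Icc (0:ℝ) 1 := S.maps i hi (by norm_num)
  have h1 : S.f i 1 ∈ Icc (0:ℝ) 1 := S.maps i hi (by norm_num)
  rcases ContinuousOn.strictMonoOn_of_injOn_Icc' (by norm_num : (0:ℝ) ≤ 1) hcont hinj with hm | hm
  · rintro y ⟨u, hu, rfl⟩
    have hu1 : u ∈ Icc (0:ℝ) 1 := ⟨hu.1.le, hu.2.le⟩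
    constructor
    · exact lt_of_le_of_lt h0.1 (hm (by norm_num) hu1 hu.1)
    · exact lt_of_lt_of_le (hm hu1 (by norm_num) hu.2) h1.2
  · rintro y ⟨u, hu, rfl⟩
    have hu1 : u ∈ Icc (0:ℝ) 1 := ⟨hu.1.le, hu.2.le⟩
    constructor
    · exact lt_of_le_of_lt h1.1 (hm hu1 (by norm_num) hu.2)
    · exact lt_of_lt_of_le (hm (by norm_num) hu1 hu.1) h0.2

lemma image_Ioo_compL {w : List ℕ} (hw : GoodW w) :
    compL S w '' Ioo (0:ℝ) 1 ⊆ Ioo (0:ℝ) 1 := by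
  induction w with
  | nil => simp
  | cons i w ih =>
      rw [compL_cons, image_comp]
      exact (image_mono (ih fun j hj => hw j (by simp [hj]))).trans
        (image_Ioo_single S (hw i (by simp)))

/-- Open cylinders of words differing at some position are disjoint. -/
lemma openCyl_disjoint {u : List ℕ} {i j : ℕ} {v₁ v₂ : List ℕ}
    (hu : GoodW u) (hi : 1 ≤ i) (hj : 1 ≤ j) (hv₁ : GoodW v₁) (hv₂ : GoodW v₂)
    (hij : i ≠ j) :
    Disjoint (compL S (u ++ i :: v₁) '' Ioo (0:ℝ) 1)
      (compL S (u ++ j :: v₂) '' Ioo (0:ℝ) 1) := by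
  have key : ∀ (i' : ℕ) (v : List ℕ), 1 ≤ i' → GoodW v →
      compL S (u ++ i' :: v) '' Ioo (0:ℝ) 1 ⊆ compL S u '' (S.f i' '' Ioo (0:ℝ) 1) := by
    intro i' v hi' hv
    rw [compL_append, compL_cons]
    rw [image_comp, image_comp]
    apply image_mono
    apply image_mono
    exact image_Ioo_compL S hv
  have hIsub : ∀ (i' : ℕ), 1 ≤ i' → S.f i' '' Ioo (0:ℝ) 1 ⊆ Icc (0:ℝ) 1 := by
    intro i' hi'
    exact (image_Ioo_single S hi').trans Ioo_subset_Icc_self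
  have hdisj := S.disj i j hi hj hij
  have hint : compL S u '' (S.f i '' Ioo (0:ℝ) 1) ∩ compL S u '' (S.f j '' Ioo (0:ℝ) 1) = ∅ := by
    rw [← (injOn_compL S hu).image_inter (hIsub i hi) (hIsub j hj)]
    rw [disjoint_iff_inter_eq_empty.1 hdisj]
    exact image_empty _
  refine Set.disjoint_of_subset (key i v₁ hi hv₁) (key j v₂ hj hv₂) ?_
  rw [Set.disjoint_iff_inter_eq_empty]
  exact hint

end Conv

section Digits

open scoped Classical

variable (Al : Finset ℕ) (p : ℕ → ℝ)

noncomputable def cum (i : ℕ) : ℝ := ∑ j ∈ Al.filter (· < i), p j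

noncomputable def stepD (s : ℝ × ℝ) (i : ℕ) : ℝ × ℝ :=
  (s.1 + s.2 * cum Al p i, s.2 * p i)

noncomputable def state (w : List ℕ) : ℝ × ℝ := w.foldl (stepD Al p) (0, 1)

noncomputable def PP (w : List ℕ) : ℝ := (w.map p).prod

@[simp] lemma PP_nil : PP p [] = 1 := rfl

lemma PP_append (w₁ w₂ : List ℕ) : PP p (w₁ ++ w₂) = PP p w₁ * PP p w₂ := by
  simp [PP]

lemma PP_pos {w : List ℕ} (hp : ∀ i ∈ w, 0 < p i) : 0 < PP p w := by
  induction w with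
  | nil => norm_num
  | cons i w ih =>
      have : PP p (i :: w) = p i * PP p w := by simp [PP]
      rw [this]
      exact mul_pos (hp i (by simp)) (ih fun j hj => hp j (by simp [hj]))

@[simp] lemma state_nil : state Al p [] = (0, 1) := rfl

lemma state_append (w : List ℕ) (i : ℕ) :
    state Al p (w ++ [i]) = stepD Al p (state Al p w) i := by
  simp [state, List.foldl_append]

lemma state_snd (w : List ℕ) : (state Al p w).2 = PP p w := by
  have key : ∀ (w : List ℕ) (init : ℝ × ℝ), (w.foldl (stepD Al p) init).2 = init.2 * PP p w := by
    intro w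
    induction w with
    | nil => simp
    | cons i w ih =>
        intro init
        have : PP p (i :: w) = p i * PP p w := by simp [PP]
        rw [List.foldl_cons, ih, this, stepD]
        ring
  rw [state, key]
  simp

noncomputable def pick (t : ℝ) (s : ℝ × ℝ) : ℕ :=
  if h : (Al.filter fun i => s.1 + s.2 * cum Al p i ≤ t).Nonempty then
    (Al.filter fun i => s.1 + s.2 * cum Al p i ≤ t).max' h
  else if h' : Al.Nonempty then Al.min' h' else 0

lemma pick_mem (hA : Al.Nonempty) (t : ℝ) (s : ℝ × ℝ) : pick Al p t s ∈ Al := by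
  unfold pick
  split_ifs with h
  · exact Finset.mem_of_mem_filter _ ((Al.filter _).max'_mem h)
  · exact Al.min'_mem hA

lemma cum_min (hA : Al.Nonempty) : cum Al p (Al.min' hA) = 0 := by
  unfold cum
  rw [Finset.filter_false_of_mem, Finset.sum_empty]
  intro j hj
  simp only [not_lt]
  exact Al.min'_le j hj

lemma pick_spec (hA : Al.Nonempty) (hp : ∀ i ∈ Al, 0 < p i)
    (hsum : ∑ i ∈ Al, p i = 1) {t l c : ℝ} (hc : 0 < c) (ht : l ≤ t) (ht' : t < l + c) :
    l + c * cum Al p (pick Al p t (l, c)) ≤ t ∧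
      t < l + c * (cum Al p (pick Al p t (l, c)) + p (pick Al p t (l, c))) := by
  set F := Al.filter fun i => l + c * cum Al p i ≤ t with hF
  have hmin : Al.min' hA ∈ F := by
    rw [hF, Finset.mem_filter]
    exact ⟨Al.min'_mem hA, by rw [cum_min Al p hA]; simpa using ht⟩
  have hFne : F.Nonempty := ⟨_, hmin⟩
  have hpick : pick Al p t (l, c) = F.max' hFne := by
    unfold pick
    rw [dif_pos]
  set i := F.max' hFne with hi
  have hiF : i ∈ F := F.max'_mem hFne
  have hiA : i ∈ Al := Finset.mem_of_mem_filter _ hiF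
  have hile : l + c * cum Al p i ≤ t := (Finset.mem_filter.1 hiF).2
  rw [hpick]
  refine ⟨hile, ?_⟩
  by_contra hge
  push_neg at hge
  have hinsert : Al.filter (· < i) ∪ {i} = Al.filter (· ≤ i) := by
    ext j
    simp only [Finset.mem_union, Finset.mem_filter, Finset.mem_singleton]
    constructor
    · rintro (⟨hj, hj'⟩ | rfl)
      · exact ⟨hj, hj'.le⟩
      · exact ⟨hiA, le_refl _⟩
    · rintro ⟨hj, hj'⟩
      rcases lt_or_eq_of_le hj' with h | h
      · exact Or.inl ⟨hj, h⟩
      · exact Or.inr h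
  have hdisj : Disjoint (Al.filter (· < i)) ({i} : Finset ℕ) := by
    simp [Finset.disjoint_singleton_right]
  have hsum_le : cum Al p i + p i = ∑ j ∈ Al.filter (· ≤ i), p j := by
    rw [← hinsert, Finset.sum_union hdisj]
    simp [cum]
  set G := Al.filter fun j => i < j with hG
  rcases G.eq_empty_or_nonempty with hGe | hGne
  · -- i is the max of Al; the cumulative sum is 1
    have hall : Al.filter (· ≤ i) = Al := by
      ext j
      simp only [Finset.mem_filter, and_iff_left_iff_imp]
      intro hj
      by_contra hji
      push_neg at hji
      have : j ∈ G := by rw [hG, Finset.mem_filter]; exact ⟨hj, hji⟩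
      rw [hGe] at this
      simp at this
    have h1 : cum Al p i + p i = 1 := by rw [hsum_le, hall, hsum]
    rw [h1, mul_one] at hge
    linarith
  · set i' := G.min' hGne with hi'
    have hi'G : i' ∈ G := G.min'_mem hGne
    have hi'A : i' ∈ Al := Finset.mem_of_mem_filter _ hi'G
    have hii' : i < i' := (Finset.mem_filter.1 hi'G).2
    have hcum' : cum Al p i' = cum Al p i + p i := by
      rw [hsum_le]
      unfold cum
      congr 1
      ext j
      simp only [Finset.mem_filter, and_congr_right_iff]
      intro hj
      constructor
      · intro hji'
        by_contra hji
        push_neg at hji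
        have : j ∈ G := by rw [hG, Finset.mem_filter]; exact ⟨hj, hji⟩
        have := G.min'_le j this
        omega
      · intro hji
        exact lt_of_le_of_lt hji hii'
    have : i' ∈ F := by
      rw [hF, Finset.mem_filter]
      exact ⟨hi'A, by rw [hcum']; linarith⟩
    have := F.le_max' i' this
    omega

noncomputable def wrd (t : ℝ) : ℕ → List ℕ
  | 0 => []
  | n + 1 => wrd t n ++ [pick Al p t (state Al p (wrd t n))]

noncomputable def dig (t : ℝ) (n : ℕ) : ℕ := pick Al p t (state Al p (wrd Al p t n))

lemma wrd_eq_range_map (t : ℝ) (n : ℕ) :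
    wrd Al p t n = (List.range n).map (dig Al p t) := by
  induction n with
  | zero => simp [wrd]
  | succ n ih => rw [wrd, List.range_succ, List.map_append, ← ih]; rfl

lemma wrd_mem (hA : Al.Nonempty) (t : ℝ) (n : ℕ) : ∀ i ∈ wrd Al p t n, i ∈ Al := by
  induction n with
  | zero => simp [wrd]
  | succ n ih =>
      intro i hi
      rw [wrd] at hi
      rcases List.mem_append.1 hi with h | h
      · exact ih i h
      · simp at h
        rw [h]
        exact pick_mem Al p hA t _

lemma wrd_invariant (hA : Al.Nonempty) (hp : ∀ i ∈ Al, 0 < p i)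
    (hsum : ∑ i ∈ Al, p i = 1) {t : ℝ} (ht : t ∈ Ico (0:ℝ) 1) (n : ℕ) :
    (state Al p (wrd Al p t n)).1 ≤ t ∧
      t < (state Al p (wrd Al p t n)).1 + (state Al p (wrd Al p t n)).2 := by
  induction n with
  | zero => simpa [wrd] using ⟨ht.1, ht.2⟩
  | succ n ih =>
      have hgood := wrd_mem Al p hA t n
      have hPP : 0 < PP p (wrd Al p t n) := PP_pos p fun i hi => hp i (hgood i hi)
      have hc : 0 < (state Al p (wrd Al p t n)).2 := by rw [state_snd]; exact hPP
      have hspec := pick_spec Al p hA hp hsum hc ih.1 (by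
        have := ih.2
        exact this)
      rw [wrd, state_append]
      set s := state Al p (wrd Al p t n)
      have hs : s = ((s.1 : ℝ), (s.2 : ℝ)) := rfl
      constructor
      · show s.1 + s.2 * cum Al p _ ≤ t
        rw [hs] at hspec ⊢
        exact hspec.1
      · show t < s.1 + s.2 * cum Al p _ + s.2 * p _
        rw [hs] at hspec ⊢
        have := hspec.2
        simp only at this ⊢
        linarith [this]

end Digits

section Helpers

lemma xiProd_le_one {w : List ℕ} (hw : GoodW w) {b : ℝ} (hb : 0 ≤ b) (hb1 : b ≤ 1)
    (hwb : ∀ i ∈ w, S.ξ i ≤ b) : xiProd S w ≤ b ^ w.length := by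
  induction w with
  | nil => simp
  | cons i w ih =>
      rw [xiProd_cons, List.length_cons, pow_succ]
      have h1 : S.ξ i ≤ b := hwb i (by simp)
      have h2 : xiProd S w ≤ b ^ w.length :=
        ih (fun j hj => hw j (by simp [hj])) (fun j hj => hwb j (by simp [hj]))
      have h3 : 0 ≤ xiProd S w := (xiProd_pos S fun j hj => hw j (by simp [hj])).le
      calc S.ξ i * xiProd S w ≤ b * (b ^ w.length) := mul_le_mul h1 h2 h3 hb
        _ = b ^ w.length * b := by ring

lemma xiProd_prefix_le {w v : List ℕ} (hw : GoodW w) (hv : GoodW v)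
    (hξ : ∀ i ∈ v, S.ξ i ≤ 1) : xiProd S (w ++ v) ≤ xiProd S w := by
  rw [xiProd_append]
  have h1 : xiProd S v ≤ 1 := by
    have := xiProd_le_one S hv zero_le_one le_rfl hξ
    simpa using this
  have h2 : 0 ≤ xiProd S w := (xiProd_pos S hw).le
  nlinarith [(xiProd_pos S hv).le]

/-- `PP` for the weights `p i = ξ i ^ sm` equals `xiProd ^ sm`. -/
lemma PP_eq_rpow (sm : ℝ) {w : List ℕ} (hw : GoodW w) :
    PP (fun i => S.ξ i ^ sm) w = xiProd S w ^ sm := by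
  induction w with
  | nil => simp
  | cons i w ih =>
      have h1 : PP (fun i => S.ξ i ^ sm) (i :: w)
          = S.ξ i ^ sm * PP (fun i => S.ξ i ^ sm) w := by simp [PP]
      rw [h1, xiProd_cons, ih (fun j hj => hw j (by simp [hj])),
        Real.mul_rpow (xi_pos S (hw i (by simp))).le
          (xiProd_pos S fun j hj => hw j (by simp [hj])).le]

/-- Two lists, neither a prefix of the other, differ first at some position. -/
lemma first_diff : ∀ (w w' : List ℕ), ¬ w <+: w' → ¬ w' <+: w →
    ∃ (u : List ℕ) (i j : ℕ) (v v' : List ℕ),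
      i ≠ j ∧ w = u ++ i :: v ∧ w' = u ++ j :: v' := by
  intro w
  induction w with
  | nil => intro w' h _; exact absurd (List.nil_prefix) h
  | cons i tl ih =>
      intro w' h h'
      match w' with
      | [] => exact absurd (List.nil_prefix) h'
      | j :: tl' =>
          rcases eq_or_ne i j with rfl | hij
          · have h1 : ¬ tl <+: tl' := fun hc => h (by simpa using hc)
            have h2 : ¬ tl' <+: tl := fun hc => h' (by simpa using hc)
            obtain ⟨u, a, b, v, v', hab, hw, hw'⟩ := ih tl' h1 h2
            exact ⟨i :: u, a, b, v, v', hab, by simp [hw], by simp [hw']⟩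
          · exact ⟨[], i, j, tl, tl', hij, rfl, rfl⟩

/-- Interval overlap estimate. -/
lemma overlap_est {α β x y r δ : ℝ} (hδ : 0 < δ) (hαβ : δ ≤ β - α)
    (hy : y ∈ Icc α β) (hyx : |y - x| ≤ r) :
    ENNReal.ofReal δ ≤ volume (Icc α β ∩ Metric.closedBall x (r + δ)) := by
  rw [Real.closedBall_eq_Icc, Set.Icc_inter_Icc, Real.volume_Icc]
  apply ENNReal.ofReal_le_ofReal
  have h1 := hy.1
  have h2 := hy.2
  have h3 : y - x ≤ r := (abs_le.1 hyx).2
  have h4 : -(r) ≤ y - x := (abs_le.1 hyx).1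
  rcases le_total (y - δ) α with hc | hc
  · -- max part is α-ish
    have hmax : α ⊔ (x - (r + δ)) ≤ α := by
      apply sup_le le_rfl
      linarith
    have hmin : α + δ ≤ β ⊓ (x + (r + δ)) := by
      apply le_inf
      · linarith
      · linarith
    linarith
  · have hmax : α ⊔ (x - (r + δ)) ≤ y - δ := by
      apply sup_le hc
      linarith
    have hmin : y ≤ β ⊓ (x + (r + δ)) := by
      apply le_inf h2
      linarith
    linarith

end Helpers

section Main

open scoped Classical

/-- Core lower bound: if the weights `ξ i ^ sm` on the alphabet `[k+1, m]` sum to `1`,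
then the limit set has Hausdorff dimension at least `sm`. -/
theorem main_lower (S : DDecaying d) (k m : ℕ) (sm : ℝ)
    (hsm : ∑ i ∈ Finset.Icc (k + 1) m, S.ξ i ^ sm = 1) :
    ENNReal.ofReal sm ≤ dimH {x : ℝ | ∃ a : ℕ → ℕ, (∀ n, a n ∈ Finset.Icc (k + 1) m) ∧
        Tendsto (S.projSeq a) atTop (𝓝 x)} := by
  rcases le_or_gt sm 0 with hsm0 | hsm0
  · rw [ENNReal.ofReal_of_nonpos hsm0]; exact zero_le
  set Λ := {x : ℝ | ∃ a : ℕ → ℕ, (∀ n, a n ∈ Finset.Icc (k + 1) m) ∧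
      Tendsto (S.projSeq a) atTop (𝓝 x)} with hΛ
  obtain ⟨m₀, hm₀, A, hA0, hA1, hcontr⟩ := S.contract
  have hC : CHyp S m₀ A := ⟨hm₀, hA0, hA1, hcontr⟩
  set Al := Finset.Icc (k + 1) m with hAldef
  have hAne : Al.Nonempty := by
    rcases Al.eq_empty_or_nonempty with h | h
    · rw [h] at hsm; simp at hsm
    · exact h
  have hi1 : ∀ i ∈ Al, 1 ≤ i := fun i hi => by
    rw [hAldef, Finset.mem_Icc] at hi; omega
  set p : ℕ → ℝ := fun i => S.ξ i ^ sm with hpdef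
  have hppos : ∀ i ∈ Al, 0 < p i := fun i hi =>
    Real.rpow_pos_of_pos (xi_pos S (hi1 i hi)) _
  have hpsum : ∑ i ∈ Al, p i = 1 := hsm
  set c₀ : ℝ := Al.inf' hAne S.ξ with hc₀def
  have hc₀pos : 0 < c₀ := (Finset.lt_inf'_iff hAne).2 fun i hi => xi_pos S (hi1 i hi)
  have hc₀le : ∀ i ∈ Al, c₀ ≤ S.ξ i := fun i hi => Finset.inf'_le _ hi
  set ξM : ℝ := Al.sup' hAne S.ξ with hξMdef
  have hξM1 : ξM < 1 := (Finset.sup'_lt_iff hAne).2 fun i hi => xi_lt_one S hC (hi1 i hi)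
  have hξM0 : 0 ≤ ξM := by
    obtain ⟨i, hi⟩ := hAne
    exact le_trans (xi_pos S (hi1 i hi)).le (Finset.le_sup' _ hi)
  have hξMle : ∀ i ∈ Al, S.ξ i ≤ ξM := fun i hi => Finset.le_sup' _ hi
  -- the digit map and the projection
  have hdig1 : ∀ (t : ℝ) (j : ℕ), 1 ≤ dig Al p t j := fun t j =>
    hi1 _ (pick_mem Al p hAne t _)
  have hlim : ∀ t : ℝ, ∃ x, Tendsto (S.projSeq (dig Al p t)) atTop (𝓝 x) :=
    fun t => exists_lim S hC (hdig1 t)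
  choose Pt hPt using hlim
  have hPtΛ : ∀ t, Pt t ∈ Λ := fun t =>
    ⟨dig Al p t, fun n => pick_mem Al p hAne t _, hPt t⟩
  -- words of digits
  have hwrdgood : ∀ (t : ℝ) (n : ℕ), GoodW (wrd Al p t n) := fun t n i hi =>
    hi1 i (wrd_mem Al p hAne t n i hi)
  have hwrdlen : ∀ (t : ℝ) (n : ℕ), (wrd Al p t n).length = n := fun t n => by
    rw [wrd_eq_range_map]; simp
  have hxiwrd : ∀ (t : ℝ) (n : ℕ), xiProd S (wrd Al p t n) ≤ ξM ^ n := by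
    intro t n
    have := xiProd_le_one S (hwrdgood t n) hξM0 hξM1.le
      (fun i hi => hξMle i (wrd_mem Al p hAne t n i hi))
    rwa [hwrdlen] at this
  have hstop : ∀ (t : ℝ) (r : ℝ), 0 < r → ∃ n, xiProd S (wrd Al p t n) < r := by
    intro t r hr
    have h := tendsto_pow_atTop_nhds_zero_of_lt_one hξM0 hξM1
    obtain ⟨n, hn⟩ := (h.eventually (gt_mem_nhds hr)).exists
    exact ⟨n, lt_of_le_of_lt (hxiwrd t n) hn⟩
  set Cc : ℝ := 2 / c₀ + 2 with hCcdef
  have hCc0 : 0 < Cc := by positivity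
  -- THE KEY MEASURE ESTIMATE
  have KEY : ∀ (x r : ℝ), 0 < r → r ≤ 1 →
      volume {t : ℝ | t ∈ Ico (0:ℝ) 1 ∧ Pt t ∈ Metric.closedBall x r}
        ≤ ENNReal.ofReal (Cc * r ^ sm) := by
    intro x r hr0 hr1
    set δ : ℝ := c₀ * r with hδdef
    have hδ0 : 0 < δ := mul_pos hc₀pos hr0
    -- the collection of minimal (stopping) words whose cylinder meets the ball
    set SW : Set (List ℕ) := {w | (∀ i ∈ w, i ∈ Al) ∧ xiProd S w < r ∧
      ∃ u i, w = u ++ [i] ∧ r ≤ xiProd S u} with hSWdef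
    set W : Set (List ℕ) :=
      {w ∈ SW | (compL S w '' Icc (0:ℝ) 1 ∩ Metric.closedBall x r).Nonempty} with hWdef
    have hSWgood : ∀ w ∈ SW, GoodW w := fun w hw i hi => hi1 i (hw.1 i hi)
    have hSWlow : ∀ w ∈ SW, δ ≤ xiProd S w := by
      rintro w ⟨hwA, hlt, u, i, rfl, hu⟩
      have hiA : i ∈ Al := hwA i (by simp)
      have hgu : GoodW u := fun j hj => hi1 j (hwA j (by simp [hj]))
      have hxi : xiProd S (u ++ [i]) = xiProd S u * S.ξ i := by
        rw [xiProd_append]; simp [xiProd]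
      rw [hxi, hδdef]
      calc c₀ * r = r * c₀ := by ring
        _ ≤ xiProd S u * S.ξ i :=
            mul_le_mul hu (hc₀le i hiA) hc₀pos.le (xiProd_pos S hgu).le
    -- prefix-freeness
    have hpf : ∀ w ∈ SW, ∀ w' ∈ SW, w <+: w' → w = w' := by
      rintro w hw w' hw' hpre
      by_contra hne
      obtain ⟨hwA, hlt, -⟩ := hw
      obtain ⟨hw'A, hlt', u', i', hw'eq, hu'⟩ := hw'
      have hlenlt : w.length < w'.length := by
        rcases lt_or_eq_of_le hpre.length_le with h | h
        · exact h
        · exact absurd (List.IsPrefix.eq_of_length hpre h) hne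
      have hu'pre : u' <+: w' := by rw [hw'eq]; exact ⟨[i'], rfl⟩
      have hlen2 : w.length ≤ u'.length := by
        have : w'.length = u'.length + 1 := by rw [hw'eq]; simp
        omega
      have hwu' : w <+: u' := List.prefix_of_prefix_length_le hpre hu'pre hlen2
      obtain ⟨v₂, rfl⟩ := hwu'
      have hgw : GoodW w := fun j hj => hi1 j (hwA j hj)
      have hgv : GoodW v₂ := fun j hj => hi1 j (hw'A j (by rw [hw'eq]; simp [hj]))
      have hle : xiProd S (w ++ v₂) ≤ xiProd S w :=
        xiProd_prefix_le S hgw hgv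
          (fun j hj => (xi_lt_one S hC (hgv j hj)).le)
      linarith
    -- a.e. disjointness of the cylinders of distinct stopping words
    have hAED : ∀ w ∈ SW, ∀ w' ∈ SW, w ≠ w' →
        volume ((compL S w '' Icc (0:ℝ) 1) ∩ (compL S w' '' Icc (0:ℝ) 1)) = 0 := by
      intro w hw w' hw' hne
      have h1 : ¬ w <+: w' := fun h => hne (hpf w hw w' hw' h)
      have h2 : ¬ w' <+: w := fun h => hne.symm (hpf w' hw' w hw h)
      obtain ⟨u, i, j, v, v', hij, rfl, rfl⟩ := first_diff w w' h1 h2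
      have hgu : GoodW u := fun a ha => hi1 a (hw.1 a (by simp [ha]))
      have hgi : 1 ≤ i := hi1 i (hw.1 i (by simp))
      have hgj : 1 ≤ j := hi1 j (hw'.1 j (by simp))
      have hgv : GoodW v := fun a ha => hi1 a (hw.1 a (by simp [ha]))
      have hgv' : GoodW v' := fun a ha => hi1 a (hw'.1 a (by simp [ha]))
      have hdisj := openCyl_disjoint S hgu hgi hgj hgv hgv' hij
      set w₁ := u ++ i :: v
      set w₂ := u ++ j :: v'
      have hsplit : ∀ w'' : List ℕ, compL S w'' '' Icc (0:ℝ) 1 ⊆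
          compL S w'' '' Ioo (0:ℝ) 1 ∪ {compL S w'' 0, compL S w'' 1} := by
        rintro w'' y ⟨z, hz, rfl⟩
        rcases eq_or_lt_of_le hz.1 with h0 | h0
        · exact Or.inr (by simp [← h0])
        rcases eq_or_lt_of_le hz.2 with h1 | h1
        · exact Or.inr (by simp [h1])
        exact Or.inl (mem_image_of_mem _ ⟨h0, h1⟩)
      apply measure_mono_null (s := _)
        (t := (compL S w₁ '' Ioo (0:ℝ) 1 ∩ compL S w₂ '' Ioo (0:ℝ) 1) ∪
          ({compL S w₁ 0, compL S w₁ 1} ∪ {compL S w₂ 0, compL S w₂ 1}))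
      · rintro y ⟨hy1, hy2⟩
        rcases hsplit w₁ hy1 with h | h
        · rcases hsplit w₂ hy2 with h' | h'
          · exact Or.inl ⟨h, h'⟩
          · exact Or.inr (Or.inr h')
        · exact Or.inr (Or.inl h)
      · rw [Set.disjoint_iff_inter_eq_empty.1 hdisj]
        simp only [Set.empty_union]
        apply measure_union_null <;>
          exact Set.Finite.measure_zero (Set.toFinite _) _
    -- the covering of the preimage of the ball by the digit intervals
    have hcover : {t : ℝ | t ∈ Ico (0:ℝ) 1 ∧ Pt t ∈ Metric.closedBall x r} ⊆
        ⋃ w ∈ W, Ico ((state Al p w).1) ((state Al p w).1 + (state Al p w).2) := by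
      rintro t ⟨ht, hB⟩
      have hex : ∃ n, xiProd S (wrd Al p t n) < r := hstop t r hr0
      set n₀ := Nat.find hex with hn₀def
      have hn₀ : xiProd S (wrd Al p t n₀) < r := Nat.find_spec hex
      have hn₀min : ∀ j, j < n₀ → ¬ xiProd S (wrd Al p t j) < r := fun j hj =>
        Nat.find_min hex hj
      have hn₀pos : n₀ ≠ 0 := by
        intro h
        rw [h] at hn₀
        have : xiProd S (wrd Al p t 0) = 1 := by simp [wrd, xiProd]
        rw [this] at hn₀
        linarith
      set w := wrd Al p t n₀ with hwdef2
      have hwSW : w ∈ SW := by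
        refine ⟨fun i hi => wrd_mem Al p hAne t n₀ i hi, hn₀, ?_⟩
        obtain ⟨n₁, hn1⟩ : ∃ n₁, n₀ = n₁ + 1 := ⟨n₀ - 1, by omega⟩
        refine ⟨wrd Al p t n₁, pick Al p t (state Al p (wrd Al p t n₁)), ?_, ?_⟩
        · rw [hwdef2, hn1, wrd]
        · by_contra hcon
          push_neg at hcon
          exact hn₀min n₁ (by omega) hcon
      have hPtcyl : Pt t ∈ compL S w '' Icc (0:ℝ) 1 := by
        have h := lim_mem_cyl S hC (hdig1 t) (hPt t) n₀
        rwa [← wrd_eq_range_map] at h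
      have hwW : w ∈ W := ⟨hwSW, ⟨Pt t, hPtcyl, hB⟩⟩
      have hinv := wrd_invariant Al p hAne hppos hpsum ht n₀
      exact mem_biUnion hwW ⟨hinv.1, hinv.2⟩
    -- the measure computation
    have hWc : W.Countable := Set.to_countable W
    have hWSW : W ⊆ SW := fun w hw => hw.1
    -- per-word estimate
    have hterm : ∀ w ∈ W,
        volume (Ico ((state Al p w).1) ((state Al p w).1 + (state Al p w).2)) ≤
          ENNReal.ofReal (r ^ sm / δ) *
            volume (compL S w '' Icc (0:ℝ) 1 ∩ Metric.closedBall x (r + δ)) := by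
      intro w hw
      have hwSW := hWSW hw
      have hgw : GoodW w := hSWgood w hwSW
      have hvol1 : volume (Ico ((state Al p w).1) ((state Al p w).1 + (state Al p w).2))
          = ENNReal.ofReal (PP p w) := by
        rw [Real.volume_Ico, add_sub_cancel_left, state_snd]
      have hPPle : PP p w ≤ r ^ sm := by
        rw [PP_eq_rpow S sm hgw]
        exact Real.rpow_le_rpow (xiProd_pos S hgw).le hwSW.2.1.le hsm0.le
      -- overlap bound
      obtain ⟨α, β, hαβ, hcyl, hdiam, hα0, hβ1⟩ := cyl_structure S hgw
      obtain ⟨y, hycyl, hyB⟩ := hw.2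
      have hyI : y ∈ Icc α β := hcyl ▸ hycyl
      have hover : ENNReal.ofReal δ ≤
          volume (compL S w '' Icc (0:ℝ) 1 ∩ Metric.closedBall x (r + δ)) := by
        rw [hcyl]
        exact overlap_est hδ0 (le_trans (hSWlow w hwSW) hdiam) hyI
          (by rwa [Metric.mem_closedBall, Real.dist_eq] at hyB)
      calc volume (Ico ((state Al p w).1) ((state Al p w).1 + (state Al p w).2))
          = ENNReal.ofReal (PP p w) := hvol1
        _ ≤ ENNReal.ofReal (r ^ sm) := ENNReal.ofReal_le_ofReal hPPle
        _ = ENNReal.ofReal (r ^ sm / δ * δ) := by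
            rw [div_mul_cancel₀]
            exact hδ0.ne'
        _ = ENNReal.ofReal (r ^ sm / δ) * ENNReal.ofReal δ := by
            rw [ENNReal.ofReal_mul (by positivity)]
        _ ≤ _ := mul_le_mul_right hover _
    -- a.e. disjointness for the intersected family
    have hAED2 : W.Pairwise (Function.onFun (AEDisjoint volume)
        fun w => compL S w '' Icc (0:ℝ) 1 ∩ Metric.closedBall x (r + δ)) := by
      intro w hw w' hw' hne
      apply measure_mono_null (t := (compL S w '' Icc (0:ℝ) 1) ∩ (compL S w' '' Icc (0:ℝ) 1))
      · intro y hy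
        exact ⟨hy.1.1, hy.2.1⟩
      · exact hAED w (hWSW hw) w' (hWSW hw') hne
    have hmeas : ∀ w ∈ W, NullMeasurableSet
        (compL S w '' Icc (0:ℝ) 1 ∩ Metric.closedBall x (r + δ)) volume := by
      intro w hw
      exact (((isCompact_cyl S (hSWgood w (hWSW hw))).isClosed.measurableSet).inter
        Metric.isClosed_closedBall.measurableSet).nullMeasurableSet
    calc volume {t : ℝ | t ∈ Ico (0:ℝ) 1 ∧ Pt t ∈ Metric.closedBall x r}
        ≤ volume (⋃ w ∈ W, Ico ((state Al p w).1) ((state Al p w).1 + (state Al p w).2)) :=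
          measure_mono hcover
      _ ≤ ∑' (w : W), volume (Ico ((state Al p (w:List ℕ)).1)
            ((state Al p (w:List ℕ)).1 + (state Al p (w:List ℕ)).2)) :=
          measure_biUnion_le volume hWc _
      _ ≤ ∑' (w : W), ENNReal.ofReal (r ^ sm / δ) *
            volume (compL S (w:List ℕ) '' Icc (0:ℝ) 1 ∩ Metric.closedBall x (r + δ)) :=
          ENNReal.tsum_le_tsum (fun w => hterm w w.2)
      _ = ENNReal.ofReal (r ^ sm / δ) *
            ∑' (w : W), volume (compL S (w:List ℕ) '' Icc (0:ℝ) 1 ∩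
              Metric.closedBall x (r + δ)) := ENNReal.tsum_mul_left
      _ = ENNReal.ofReal (r ^ sm / δ) *
            volume (⋃ w ∈ W, compL S w '' Icc (0:ℝ) 1 ∩ Metric.closedBall x (r + δ)) := by
          rw [measure_biUnion₀ hWc hAED2 hmeas]
      _ ≤ ENNReal.ofReal (r ^ sm / δ) * volume (Metric.closedBall x (r + δ)) := by
          apply mul_le_mul_right
          apply measure_mono
          exact Set.iUnion₂_subset fun w hw => Set.inter_subset_right
      _ = ENNReal.ofReal (r ^ sm / δ) * ENNReal.ofReal (2 * (r + δ)) := by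
          rw [Real.volume_closedBall]
      _ = ENNReal.ofReal (r ^ sm / δ * (2 * (r + δ))) := by
          rw [← ENNReal.ofReal_mul (by positivity)]
      _ = ENNReal.ofReal (Cc * r ^ sm) := by
          congr 1
          rw [hδdef, hCcdef]
          have hrpow : 0 < r ^ sm := Real.rpow_pos_of_pos hr0 _
          field_simp
  -- FROM KEY TO THE HAUSDORFF MEASURE LOWER BOUND
  have hCcne : ENNReal.ofReal Cc ≠ 0 := by
    simp [ENNReal.ofReal_eq_zero, not_le, hCc0]
  have hCcnetop : ENNReal.ofReal Cc ≠ ⊤ := ENNReal.ofReal_ne_top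
  have hper : ∀ (U : Set ℝ), EMetric.diam U ≤ 1 →
      volume {τ : ℝ | τ ∈ Ico (0:ℝ) 1 ∧ Pt τ ∈ U} ≤
        ENNReal.ofReal Cc * ⨆ _ : U.Nonempty, EMetric.diam U ^ sm := by
    intro U hdU
    by_cases hne : U.Nonempty
    swap
    · have : U = ∅ := Set.not_nonempty_iff_eq_empty.1 hne
      subst this
      simp
    rw [iSup_pos hne]
    obtain ⟨x₀, hx₀⟩ := hne
    by_cases hd0 : EMetric.diam U = 0
    · rw [hd0, ENNReal.zero_rpow_of_pos hsm0, mul_zero]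
      have hsub : U.Subsingleton := EMetric.diam_eq_zero_iff.1 hd0
      -- the preimage has measure zero
      refine ENNReal.le_of_forall_pos_le_add fun ε hε _ => ?_
      rw [zero_add]
      set ρ : ℝ := min 1 (((ε : ℝ) / Cc) ^ (sm⁻¹)) with hρdef
      have hεC : (0:ℝ) < (ε : ℝ) / Cc := by positivity
      have hρ0 : 0 < ρ := lt_min one_pos (Real.rpow_pos_of_pos hεC _)
      have hρ1 : ρ ≤ 1 := min_le_left _ _
      have hsubB : {τ : ℝ | τ ∈ Ico (0:ℝ) 1 ∧ Pt τ ∈ U} ⊆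
          {τ : ℝ | τ ∈ Ico (0:ℝ) 1 ∧ Pt τ ∈ Metric.closedBall x₀ ρ} := by
        rintro τ ⟨hτ, hPτ⟩
        refine ⟨hτ, ?_⟩
        rw [hsub hPτ hx₀]
        exact Metric.mem_closedBall_self hρ0.le
      have hbound := (measure_mono hsubB).trans (KEY x₀ ρ hρ0 hρ1)
      refine hbound.trans ?_
      have hval : Cc * ρ ^ sm ≤ (ε : ℝ) := by
        have h1 : ρ ^ sm ≤ (((ε : ℝ) / Cc) ^ (sm⁻¹)) ^ sm :=
          Real.rpow_le_rpow hρ0.le (min_le_right _ _) hsm0.le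
        rw [Real.rpow_inv_rpow hεC.le hsm0.ne'] at h1
        calc Cc * ρ ^ sm ≤ Cc * ((ε : ℝ) / Cc) := by
              exact mul_le_mul_of_nonneg_left h1 hCc0.le
          _ = (ε : ℝ) := by field_simp
      calc ENNReal.ofReal (Cc * ρ ^ sm) ≤ ENNReal.ofReal (ε : ℝ) :=
            ENNReal.ofReal_le_ofReal hval
        _ = (ε : ℝ≥0∞) := ENNReal.ofReal_coe_nnreal
    · -- positive diameter
      have hdne : EMetric.diam U ≠ ⊤ := (lt_of_le_of_lt hdU (by norm_num)).ne
      set D : ℝ := (EMetric.diam U).toReal with hDdef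
      have hD0 : 0 < D := ENNReal.toReal_pos hd0 hdne
      have hD1 : D ≤ 1 := by
        rw [hDdef]
        calc (EMetric.diam U).toReal ≤ (1 : ℝ≥0∞).toReal := ENNReal.toReal_mono (by norm_num) hdU
          _ = 1 := by simp
      have hsubB : {τ : ℝ | τ ∈ Ico (0:ℝ) 1 ∧ Pt τ ∈ U} ⊆
          {τ : ℝ | τ ∈ Ico (0:ℝ) 1 ∧ Pt τ ∈ Metric.closedBall x₀ D} := by
        rintro τ ⟨hτ, hPτ⟩
        refine ⟨hτ, ?_⟩
        rw [Metric.mem_closedBall]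
        have h1 : edist (Pt τ) x₀ ≤ EMetric.diam U := EMetric.edist_le_diam_of_mem hPτ hx₀
        have h2 : dist (Pt τ) x₀ = (edist (Pt τ) x₀).toReal := by
          rw [edist_dist, ENNReal.toReal_ofReal dist_nonneg]
        rw [h2, hDdef]
        exact ENNReal.toReal_mono hdne h1
      have hbound := (measure_mono hsubB).trans (KEY x₀ D hD0 hD1)
      refine hbound.trans (le_of_eq ?_)
      rw [ENNReal.ofReal_mul hCc0.le]
      congr 1
      rw [← ENNReal.ofReal_rpow_of_pos hD0, hDdef, ENNReal.ofReal_toReal hdne]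
  -- Hausdorff measure lower bound
  have hHge : (ENNReal.ofReal Cc)⁻¹ ≤ μH[sm] Λ := by
    rw [Measure.hausdorffMeasure_apply]
    refine le_iSup₂_of_le 1 one_pos ?_
    refine le_iInf fun t => le_iInf fun hcov => le_iInf fun hdiam => ?_
    have hsubU : Ico (0:ℝ) 1 ⊆ ⋃ n, {τ : ℝ | τ ∈ Ico (0:ℝ) 1 ∧ Pt τ ∈ t n} := by
      intro τ hτ
      obtain ⟨V, ⟨n, rfl⟩, hV⟩ := hcov (hPtΛ τ)
      exact mem_iUnion.2 ⟨n, hτ, hV⟩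
    have h1 : (1 : ℝ≥0∞) ≤ ∑' n, volume {τ : ℝ | τ ∈ Ico (0:ℝ) 1 ∧ Pt τ ∈ t n} := by
      have hv : (1 : ℝ≥0∞) = volume (Ico (0:ℝ) 1) := by
        rw [Real.volume_Ico]; norm_num
      rw [hv]
      exact (measure_mono hsubU).trans (measure_iUnion_le _)
    have h2 : (1 : ℝ≥0∞) ≤ ENNReal.ofReal Cc *
        ∑' n, ⨆ _ : (t n).Nonempty, EMetric.diam (t n) ^ sm := by
      refine h1.trans ?_
      rw [← ENNReal.tsum_mul_left]
      exact ENNReal.tsum_le_tsum fun n => hper (t n) (hdiam n)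
    calc (ENNReal.ofReal Cc)⁻¹ = (ENNReal.ofReal Cc)⁻¹ * 1 := by rw [mul_one]
      _ ≤ (ENNReal.ofReal Cc)⁻¹ * (ENNReal.ofReal Cc *
          ∑' n, ⨆ _ : (t n).Nonempty, EMetric.diam (t n) ^ sm) := mul_le_mul_right h2 _
      _ = ((ENNReal.ofReal Cc)⁻¹ * ENNReal.ofReal Cc) *
          ∑' n, ⨆ _ : (t n).Nonempty, EMetric.diam (t n) ^ sm := by rw [mul_assoc]
      _ = ∑' n, ⨆ _ : (t n).Nonempty, EMetric.diam (t n) ^ sm := by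
          rw [ENNReal.inv_mul_cancel hCcne hCcnetop, one_mul]
  have hne0 : μH[sm] Λ ≠ 0 := by
    intro h
    rw [h] at hHge
    simp only [le_zero_iff, ENNReal.inv_eq_zero] at hHge
    exact hCcnetop hHge
  have hcoe : ((sm.toNNReal : ℝ≥0) : ℝ) = sm := Real.coe_toNNReal sm hsm0.le
  have hfinal := le_dimH_of_hausdorffMeasure_ne_zero (s := Λ) (d := sm.toNNReal)
    (by rw [hcoe]; exact hne0)
  rw [hΛ] at hfinal
  exact le_trans (le_of_eq rfl) hfinal

end Main

end DDHelp

/-- Lower bound: if `s < 1/d` and `∑_{i=k+1}^m ξ_i^s ≥ 1`, then the attractor `Λ_{k,m}` of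
the finite subsystem `{f_{k+1}, …, f_m}` has `dim_H Λ_{k,m} ≥ s_m`, where `s_m` solves
`∑_{i=k+1}^m ξ_i^{s_m} = 1`; in particular `dim_H Λ_k ≥ 1/d` for every `k ≥ 1`. -/
theorem dimH_attractor_lower (d : ℝ) (S : DDecaying d) (s : ℝ) (hs : s < 1 / d)
    (k m : ℕ) (hk : 1 ≤ k)
    (hsum : 1 ≤ ∑ i ∈ Finset.Icc (k + 1) m, S.ξ i ^ s)
    (sm : ℝ) (hsm : ∑ i ∈ Finset.Icc (k + 1) m, S.ξ i ^ sm = 1) :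
    ENNReal.ofReal sm ≤
      dimH {x : ℝ | ∃ a : ℕ → ℕ, (∀ n, a n ∈ Finset.Icc (k + 1) m) ∧
        Tendsto (S.projSeq a) atTop (𝓝 x)} ∧
    ∀ k' : ℕ, 1 ≤ k' → ENNReal.ofReal (1 / d) ≤ dimH (S.attractor k') := by
  constructor
  · exact DDHelp.main_lower S k m sm hsm
  intro k' hk'
  by_contra hcon
  rw [not_le] at hcon
  have hd1 : (1:ℝ) < d := S.hd
  have hd0 : (0:ℝ) < 1 / d := by positivity
  obtain ⟨q, hq0, hlt1, hlt2⟩ := ENNReal.lt_iff_exists_real_btwn.1 hcon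
  have hq1d : q < 1 / d := (ENNReal.ofReal_lt_ofReal_iff hd0).1 hlt2
  have hqpos : 0 < q := by
    rcases eq_or_lt_of_le hq0 with h | h
    · exfalso
      rw [← h] at hlt1
      simp at hlt1
    · exact h
  have hdq : d < 1 / q := by
    rw [lt_div_iff₀ hqpos]
    rw [lt_div_iff₀ (by linarith : (0:ℝ) < d)] at hq1d
    linarith [hq1d]
  set ε' : ℝ := 1 / q - d with hε'def
  have hε'pos : 0 < ε' := by rw [hε'def]; linarith
  obtain ⟨C₁, hC₁, C₂, hC₂, hdec⟩ := S.decay ε' hε'pos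
  have hterm : ∀ i : ℕ, 1 ≤ i → C₁ ^ q / i ≤ S.ξ i ^ q := by
    intro i hi
    have hipos : (0:ℝ) < i := by exact_mod_cast hi
    have h1 := (hdec i hi).1
    have h2 : (C₁ / (i:ℝ) ^ (d + ε')) ^ q ≤ S.ξ i ^ q :=
      Real.rpow_le_rpow (by positivity) h1 hqpos.le
    rw [Real.div_rpow hC₁.le (by positivity)] at h2
    have h3 : ((i:ℝ) ^ (d + ε')) ^ q = i := by
      rw [← Real.rpow_mul hipos.le]
      have he : (d + ε') * q = 1 := by
        rw [hε'def]
        field_simp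
        ring
      rw [he, Real.rpow_one]
    rw [h3] at h2
    exact h2
  have hCq : (0:ℝ) < C₁ ^ q := Real.rpow_pos_of_pos hC₁ _
  have hnotsum : ¬ Summable (fun i : ℕ => C₁ ^ q / (i:ℝ)) := by
    intro hs'
    have h2 := hs'.mul_left (C₁ ^ q)⁻¹
    have h3 : (fun i : ℕ => (C₁ ^ q)⁻¹ * (C₁ ^ q / (i:ℝ))) = fun i : ℕ => 1 / (i:ℝ) := by
      funext i
      field_simp
    rw [h3] at h2
    exact Real.not_summable_one_div_natCast h2
  have hdiv := (not_summable_iff_tendsto_nat_atTop_of_nonneg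
    (fun n => by positivity)).1 hnotsum
  obtain ⟨M, hM⟩ : ∃ M : ℕ, 1 + ∑ i ∈ Finset.range (k' + 1), C₁ ^ q / (i:ℝ) ≤
      ∑ i ∈ Finset.range (M + 1), C₁ ^ q / (i:ℝ) := by
    obtain ⟨N, hN⟩ :=
      (hdiv.eventually_ge_atTop (1 + ∑ i ∈ Finset.range (k' + 1), C₁ ^ q / (i:ℝ))).exists
    refine ⟨N, hN.trans ?_⟩
    apply Finset.sum_le_sum_of_subset_of_nonneg
    · exact Finset.range_subset_range.2 (by omega)
    · intro i _ _; positivity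
  have hkM : k' ≤ M := by
    by_contra hMk
    push_neg at hMk
    have hsub : Finset.range (M + 1) ⊆ Finset.range (k' + 1) := Finset.range_subset_range.2 (by omega)
    have := Finset.sum_le_sum_of_subset_of_nonneg hsub (fun i _ _ => by positivity :
      ∀ i ∈ Finset.range (k' + 1), i ∉ Finset.range (M + 1) → (0:ℝ) ≤ C₁ ^ q / (i:ℝ))
    linarith
  have hsumq : 1 ≤ ∑ i ∈ Finset.Icc (k' + 1) M, S.ξ i ^ q := by
    have hIcc : Finset.Icc (k' + 1) M = Finset.Ico (k' + 1) (M + 1) :=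
      (Finset.Ico_add_one_right_eq_Icc (k' + 1) M).symm
    have h1 : ∑ i ∈ Finset.Ico (k' + 1) (M + 1), C₁ ^ q / (i:ℝ)
        = ∑ i ∈ Finset.range (M + 1), C₁ ^ q / (i:ℝ)
          - ∑ i ∈ Finset.range (k' + 1), C₁ ^ q / (i:ℝ) :=
      Finset.sum_Ico_eq_sub _ (by omega)
    have h2 : 1 ≤ ∑ i ∈ Finset.Icc (k' + 1) M, C₁ ^ q / (i:ℝ) := by
      rw [hIcc, h1]
      linarith
    refine h2.trans (Finset.sum_le_sum fun i hi => hterm i ?_)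
    have := (Finset.mem_Icc.1 hi).1
    omega
  -- IVT to find the critical exponent for the finite alphabet [k'+1, M]
  set g : ℝ → ℝ := fun τ => ∑ i ∈ Finset.Icc (k' + 1) M, S.ξ i ^ τ with hgdef
  have hAne' : (Finset.Icc (k' + 1) M).Nonempty := by
    rcases (Finset.Icc (k' + 1) M).eq_empty_or_nonempty with h | h
    · rw [h, Finset.sum_empty] at hsumq; linarith
    · exact h
  have hi1' : ∀ i ∈ Finset.Icc (k' + 1) M, 1 ≤ i := fun i hi => by
    have := (Finset.mem_Icc.1 hi).1; omega
  have hgcont : Continuous g := by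
    apply continuous_finset_sum
    intro i hi
    exact continuous_iff_continuousAt.2 fun τ =>
      Real.continuousAt_const_rpow (DDHelp.xi_pos S (hi1' i hi)).ne'
  obtain ⟨m₀, hm₀, A, hA0, hA1, hcontr⟩ := S.contract
  have hC : DDHelp.CHyp S m₀ A := ⟨hm₀, hA0, hA1, hcontr⟩
  set ξM : ℝ := (Finset.Icc (k' + 1) M).sup' hAne' S.ξ with hξMdef
  have hξM1 : ξM < 1 := (Finset.sup'_lt_iff hAne').2 fun i hi =>
    DDHelp.xi_lt_one S hC (hi1' i hi)
  have hξM0 : 0 ≤ ξM := by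
    obtain ⟨i, hi⟩ := hAne'
    exact le_trans (DDHelp.xi_pos S (hi1' i hi)).le (Finset.le_sup' _ hi)
  have htend : Tendsto (fun n : ℕ => ((Finset.Icc (k' + 1) M).card : ℝ) * ξM ^ n)
      atTop (𝓝 0) := by
    have := (tendsto_pow_atTop_nhds_zero_of_lt_one hξM0 hξM1).const_mul
      ((Finset.Icc (k' + 1) M).card : ℝ)
    simpa using this
  obtain ⟨n, hn1, hn2⟩ : ∃ n : ℕ, ((Finset.Icc (k' + 1) M).card : ℝ) * ξM ^ n < 1 ∧
      q ≤ (n:ℝ) := by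
    have h1 := htend.eventually (gt_mem_nhds one_pos)
    have h2 : ∀ᶠ n : ℕ in atTop, q ≤ (n:ℝ) := by
      filter_upwards [eventually_ge_atTop ⌈q⌉₊] with n hn
      calc q ≤ (⌈q⌉₊ : ℝ) := Nat.le_ceil q
        _ ≤ (n : ℝ) := by exact_mod_cast hn
    exact (h1.and h2).exists
  have hgn : g (n:ℝ) ≤ 1 := by
    rw [hgdef]
    calc ∑ i ∈ Finset.Icc (k' + 1) M, S.ξ i ^ (n:ℝ)
        ≤ ∑ i ∈ Finset.Icc (k' + 1) M, ξM ^ n := by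
          apply Finset.sum_le_sum
          intro i hi
          rw [Real.rpow_natCast]
          exact pow_le_pow_left₀ (DDHelp.xi_pos S (hi1' i hi)).le (Finset.le_sup' _ hi) n
      _ = ((Finset.Icc (k' + 1) M).card : ℝ) * ξM ^ n := by
          rw [Finset.sum_const, nsmul_eq_mul]
      _ ≤ 1 := hn1.le
  have hIVT := intermediate_value_Icc' hn2 hgcont.continuousOn
  have h1mem : (1:ℝ) ∈ Icc (g (n:ℝ)) (g q) := ⟨hgn, hsumq⟩
  obtain ⟨smq, hsmqI, hsmq⟩ := hIVT h1mem
  have hmain := DDHelp.main_lower S k' M smq hsmq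
  have hsub : {x : ℝ | ∃ a : ℕ → ℕ, (∀ n, a n ∈ Finset.Icc (k' + 1) M) ∧
      Tendsto (S.projSeq a) atTop (𝓝 x)} ⊆ S.attractor k' := by
    rintro x ⟨a, ha, hta⟩
    refine ⟨a, fun n => ?_, hta⟩
    have := (Finset.mem_Icc.1 (ha n)).1
    omega
  have hfin : ENNReal.ofReal q ≤ dimH (S.attractor k') :=
    le_trans (ENNReal.ofReal_le_ofReal hsmqI.1) (hmain.trans (dimH_mono hsub))
  exact absurd hfin (not_le.2 hlt1)
end

section
/- Let {f_i} be a d-decaying system with n ≤ Φ(n) ≤ βn, β > 1, and let Y_{Φ,ε} = {x : Φ(l_n) < a_n(x) ≤ l_{n+1}} with l_n defined recursively via l(n) (minimal with Σ_{i=[Φ(n)]+1}^{l(n)} ξ_i^{1/d−ε} ≥ 1). Then for any δ > 0 there exist l ∈ ℕ and N ∈ ℕ such that for all x, y ∈ Y_{Φ,ε} and all n > N, r_n(x) > (r_{n+l}(y))^{1+δ}, where r_n(z) = |C_n(z)| is the length of the n-th level cylinder containing z. -/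
open Set Filter Topology MeasureTheory

variable {d : ℝ}

section Aux
variable {d : ℝ}

private lemma foldr_comp_init (L : List (ℝ → ℝ)) (g : ℝ → ℝ) :
    L.foldr (· ∘ ·) g = L.foldr (· ∘ ·) id ∘ g := by
  induction L with
  | nil => rfl
  | cons h t ih => simp [List.foldr_cons, ih]; rfl

lemma DDecaying.comp_succ (S : DDecaying d) (a : ℕ → ℕ) (n : ℕ) :
    S.comp a (n + 1) = S.comp a n ∘ S.f (a n) := by
  unfold DDecaying.comp
  rw [List.range_succ, List.map_append, List.foldr_append, foldr_comp_init]
  rfl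

lemma DDecaying.comp_mapsTo (S : DDecaying d) (a : ℕ → ℕ) (ha : ∀ k, 1 ≤ a k) (n : ℕ) :
    Set.MapsTo (S.comp a n) (Set.Icc (0:ℝ) 1) (Set.Icc (0:ℝ) 1) := by
  induction n with
  | zero => exact fun x hx => hx
  | succ n ih =>
      rw [S.comp_succ a n]
      exact ih.comp (S.maps (a n) (ha n))

/-- Explicit derivative of the composition. -/
def DDecaying.compDeriv (S : DDecaying d) (a : ℕ → ℕ) : ℕ → ℝ → ℝ
  | 0 => fun _ => 1
  | n + 1 => fun x => S.compDeriv a n (S.f (a n) x) * S.f' (a n) x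

lemma DDecaying.comp_hasDerivAt (S : DDecaying d) (a : ℕ → ℕ) (ha : ∀ k, 1 ≤ a k) (n : ℕ)
    (hξ : ∀ k, 0 ≤ S.ξ (a k)) :
    ∀ x ∈ Set.Icc (0:ℝ) 1, HasDerivAt (S.comp a n) (S.compDeriv a n x) x ∧
      (∏ k ∈ Finset.range n, S.ξ (a k)) ≤ |S.compDeriv a n x| ∧
      |S.compDeriv a n x| ≤ ∏ k ∈ Finset.range n, S.lam (a k) := by
  induction n with
  | zero =>
      intro x hx
      refine ⟨hasDerivAt_id x, ?_, ?_⟩ <;> simp [DDecaying.compDeriv, DDecaying.comp]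
  | succ n ih =>
      intro x hx
      have hfx : S.f (a n) x ∈ Set.Icc (0:ℝ) 1 := S.maps (a n) (ha n) hx
      obtain ⟨hD, hDl, hDu⟩ := ih (S.f (a n) x) hfx
      have hf := S.hderiv (a n) (ha n) x hx
      have hb := S.derivBounds (a n) (ha n) x hx
      refine ⟨?_, ?_, ?_⟩
      · rw [S.comp_succ a n]
        exact HasDerivAt.comp x hD hf
      · rw [DDecaying.compDeriv, abs_mul, Finset.prod_range_succ]
        exact mul_le_mul hDl hb.1 (hξ n) (abs_nonneg _)
      · rw [DDecaying.compDeriv, abs_mul, Finset.prod_range_succ]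
        exact mul_le_mul hDu hb.2 (abs_nonneg _)
          (le_trans (abs_nonneg _) hDu)


lemma DDecaying.comp_continuousOn (S : DDecaying d) (a : ℕ → ℕ) (ha : ∀ k, 1 ≤ a k)
    (hξ : ∀ k, 0 ≤ S.ξ (a k)) (n : ℕ) :
    ContinuousOn (S.comp a n) (Set.Icc (0:ℝ) 1) :=
  fun x hx => ((S.comp_hasDerivAt a ha n hξ x hx).1.continuousAt).continuousWithinAt

lemma DDecaying.diam_cyl_le (S : DDecaying d) (a : ℕ → ℕ) (ha : ∀ k, 1 ≤ a k)
    (hξ : ∀ k, 0 ≤ S.ξ (a k)) (n : ℕ) :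
    Metric.diam (S.cyl a n) ≤ ∏ k ∈ Finset.range n, S.lam (a k) := by
  have hΛ : (0:ℝ) ≤ ∏ k ∈ Finset.range n, S.lam (a k) := by
    refine le_trans ?_ (S.comp_hasDerivAt a ha n hξ 0 (by norm_num)).2.2
    exact abs_nonneg _
  refine Metric.diam_le_of_forall_dist_le hΛ ?_
  rintro p ⟨x, hx, rfl⟩ q ⟨y, hy, rfl⟩
  have key : ‖S.comp a n y - S.comp a n x‖ ≤
      (∏ k ∈ Finset.range n, S.lam (a k)) * ‖y - x‖ := by
    refine Convex.norm_image_sub_le_of_norm_hasDerivWithin_le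
      (f' := S.compDeriv a n)
      (fun z hz => ((S.comp_hasDerivAt a ha n hξ z hz).1).hasDerivWithinAt)
      (fun z hz => (S.comp_hasDerivAt a ha n hξ z hz).2.2) (convex_Icc 0 1) hx hy
  have hxy : ‖y - x‖ ≤ 1 := by
    rw [Real.norm_eq_abs, abs_sub_le_iff]
    constructor <;> nlinarith [hx.1, hx.2, hy.1, hy.2]
  calc dist (S.comp a n x) (S.comp a n y) = ‖S.comp a n y - S.comp a n x‖ := by
        rw [dist_comm, Real.dist_eq, Real.norm_eq_abs]
    _ ≤ (∏ k ∈ Finset.range n, S.lam (a k)) * ‖y - x‖ := key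
    _ ≤ (∏ k ∈ Finset.range n, S.lam (a k)) * 1 := by
        exact mul_le_mul_of_nonneg_left hxy hΛ
    _ = _ := mul_one _

lemma DDecaying.le_diam_cyl (S : DDecaying d) (a : ℕ → ℕ) (ha : ∀ k, 1 ≤ a k)
    (hξ : ∀ k, 0 ≤ S.ξ (a k)) (n : ℕ) :
    (∏ k ∈ Finset.range n, S.ξ (a k)) ≤ Metric.diam (S.cyl a n) := by
  obtain ⟨c, hc, hslope⟩ := exists_hasDerivAt_eq_slope (S.comp a n) (S.compDeriv a n)
    (by norm_num : (0:ℝ) < 1) (S.comp_continuousOn a ha hξ n)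
    (fun x hx => (S.comp_hasDerivAt a ha n hξ x (Set.Ioo_subset_Icc_self hx)).1)
  have hcIcc : c ∈ Set.Icc (0:ℝ) 1 := Set.Ioo_subset_Icc_self hc
  have hbd : Bornology.IsBounded (S.cyl a n) :=
    (isCompact_Icc.image_of_continuousOn (S.comp_continuousOn a ha hξ n)).isBounded
  have h1 : S.comp a n 1 ∈ S.cyl a n := ⟨1, by norm_num, rfl⟩
  have h0 : S.comp a n 0 ∈ S.cyl a n := ⟨0, by norm_num, rfl⟩
  calc (∏ k ∈ Finset.range n, S.ξ (a k)) ≤ |S.compDeriv a n c| :=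
        (S.comp_hasDerivAt a ha n hξ c hcIcc).2.1
    _ = dist (S.comp a n 1) (S.comp a n 0) := by
        rw [Real.dist_eq, hslope]; simp
    _ ≤ Metric.diam (S.cyl a n) := Metric.dist_le_diam_of_mem hbd h1 h0

end Aux
set_option maxHeartbeats 1000000 in
/-- Lemma (rn): with `n ≤ Φ(n) ≤ βn`, `β > 1`, and `l_1 = K`, `l_{n+1} = l(l_n)` where
`l(n)` is minimal with `∑_{i=[Φ(n)]+1}^{l(n)} ξ_i^{1/d-ε} ≥ 1`, for every `δ > 0` there
are `L, N` so that for all digit sequences `a, b` in `Y_{Φ,ε}` (i.e. with `n`-th digit in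
`(Φ(l_n), l_{n+1}]`) and all `n > N`, the cylinder lengths satisfy
`r_n(a) > (r_{n+L}(b))^{1+δ}`. -/
theorem cylinder_length_comparison (d : ℝ) (S : DDecaying d) (β ε : ℝ) (hβ : 1 < β)
    (hε : 0 < ε) (hεd : ε < 1 / d) (Φ : ℕ → ℝ)
    (hΦ : ∀ n : ℕ, 1 ≤ n → (n : ℝ) ≤ Φ n ∧ Φ n ≤ β * n)
    (K : ℕ) (hK : 1 ≤ K) (l : ℕ → ℕ) (hl1 : l 1 = K)
    (hlrec : ∀ n : ℕ, 1 ≤ n →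
      IsLeast {m : ℕ | 1 ≤ ∑ i ∈ Finset.Icc (⌊Φ (l n)⌋₊ + 1) m, S.ξ i ^ (1 / d - ε)}
        (l (n + 1))) :
    ∀ δ : ℝ, 0 < δ → ∃ L N : ℕ, ∀ a : ℕ → ℕ,
      (∀ n : ℕ, Φ (l (n + 1)) < (a n : ℝ) ∧ a n ≤ l (n + 2)) →
      ∀ b : ℕ → ℕ, (∀ n : ℕ, Φ (l (n + 1)) < (b n : ℝ) ∧ b n ≤ l (n + 2)) →
      ∀ n : ℕ, N < n →
        Metric.diam (S.cyl b (n + L)) ^ (1 + δ) < Metric.diam (S.cyl a n) := by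
  intro δ hδ
  have hd0 : (0:ℝ) < d := lt_trans one_pos S.hd
  set ε' : ℝ := min (δ*d/(2*(2+δ))) (ε*d^2/2) with hε'def
  have hε'pos : 0 < ε' := lt_min (by positivity) (by positivity)
  have hε'1 : ε' ≤ δ*d/(2*(2+δ)) := min_le_left _ _
  have hε'2 : ε' ≤ ε*d^2/2 := min_le_right _ _
  have hε'd : ε' < d := by
    have : δ*d/(2*(2+δ)) < d := by
      rw [div_lt_iff₀ (by positivity)]
      nlinarith
    linarith
  have h2d : (2+δ) * (δ*d/(2*(2+δ))) = δ*d/2 := by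
    field_simp
  have hgap : δ*d/2 ≤ (1+δ)*(d-ε') - (d+ε') := by
    nlinarith [mul_le_mul_of_nonneg_left hε'1 (by linarith : (0:ℝ) ≤ 2+δ)]
  have hgappos : 0 < (1+δ)*(d-ε') - (d+ε') := by
    have : 0 < δ*d/2 := by positivity
    linarith
  set t : ℝ := 1/d - ε with htdef
  have ht : 0 < t := sub_pos.2 hεd
  set s : ℝ := (d+ε')*t with hsdef
  have hs0 : 0 < s := mul_pos (by linarith) ht
  have hs1 : s < 1 := by
    have hdne : d ≠ 0 := ne_of_gt hd0
    have h1 : s * d = (d + ε') * (1 - ε * d) := by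
      rw [hsdef, htdef]
      field_simp
      try tauto
    nlinarith [hε'2, hε'pos, hd0, mul_pos hε hd0, h1,
      mul_pos (mul_pos hε hε'pos) hd0]
  obtain ⟨C₁, hC₁, C₂, hC₂, hdec⟩ := S.decay ε' hε'pos
  have hξpos : ∀ i : ℕ, 1 ≤ i → 0 < S.ξ i := by
    intro i hi
    have hi0 : (0:ℝ) < (i:ℝ) := by exact_mod_cast hi
    exact lt_of_lt_of_le (by positivity) (hdec i hi).1
  have hlampos : ∀ i : ℕ, 1 ≤ i → 0 < S.lam i := by
    intro i hi
    have h0 : (0:ℝ) ∈ Set.Icc (0:ℝ) 1 := by norm_num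
    have hb := S.derivBounds i hi 0 h0
    exact lt_of_lt_of_le (hξpos i hi) (le_trans hb.1 hb.2)
  -- basic facts about l
  have hstep : ∀ n : ℕ, 1 ≤ n → 1 ≤ l n → l n + 1 ≤ l (n+1) := by
    intro n hn hln
    have hmem := (hlrec n hn).1
    have hne : ⌊Φ (l n)⌋₊ + 1 ≤ l (n+1) := by
      by_contra hcon
      push_neg at hcon
      rw [Set.mem_setOf_eq, Finset.Icc_eq_empty (by omega), Finset.sum_empty] at hmem
      norm_num at hmem
    have hfl : l n ≤ ⌊Φ (l n)⌋₊ := Nat.le_floor (hΦ (l n) hln).1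
    omega
  have hlge1 : ∀ n : ℕ, 1 ≤ n → 1 ≤ l n := by
    intro n hn
    induction n, hn using Nat.le_induction with
    | base => rw [hl1]; exact hK
    | succ n hn ih => have := hstep n hn ih; omega
  have hlmono : ∀ n : ℕ, 1 ≤ n → l n + 1 ≤ l (n+1) := fun n hn => hstep n hn (hlge1 n hn)
  have hlgen : ∀ n : ℕ, 1 ≤ n → n ≤ l n := by
    intro n hn
    induction n, hn using Nat.le_induction with
    | base => rw [hl1]; exact hK
    | succ n hn ih => have := hlmono n hn; omega
  -- growth bound for l
  set c : ℝ := C₁ ^ t with hcdef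
  have hc : 0 < c := Real.rpow_pos_of_pos hC₁ t
  set m₀ : ℝ := (2/c) ^ (1/(1-s)) with hm₀def
  have hm₀ : 0 < m₀ := Real.rpow_pos_of_pos (by positivity) _
  set Cr : ℝ := m₀ + 4*β + 1 with hCrdef
  have hCr1 : 1 ≤ Cr := by nlinarith
  have hlub : ∀ n : ℕ, 1 ≤ n → (l (n+1) : ℝ) ≤ Cr * l n := by
    intro n hn
    set M := ⌊Φ (l n)⌋₊ with hMdef
    have hlnR : (1:ℝ) ≤ (l n : ℝ) := by exact_mod_cast hlge1 n hn
    have hΦn := hΦ (l n) (hlge1 n hn)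
    have hM : (M:ℝ) ≤ Φ (l n) := Nat.floor_le (by linarith [hΦn.1])
    have hMβ : (M:ℝ) ≤ β * l n := le_trans hM hΦn.2
    by_cases hcase : l (n+1) ≤ M + 1
    · have hcast : (l (n+1) : ℝ) ≤ (M:ℝ) + 1 := by exact_mod_cast hcase
      nlinarith
    · push_neg at hcase
      have hm2 : M + 2 ≤ l (n+1) := hcase
      set m := l (n+1) with hmdef
      have hmpos : (0:ℝ) < (m:ℝ) := Nat.cast_pos.2 (by omega)
      have hnotmem : ¬ (1 ≤ ∑ i ∈ Finset.Icc (M+1) (m-1), S.ξ i ^ t) := by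
        intro h
        have := (hlrec n hn).2 h
        omega
      push_neg at hnotmem
      have hterm : ∀ i ∈ Finset.Icc (M+1) (m-1), c / (m:ℝ)^s ≤ S.ξ i ^ t := by
        intro i hi
        rw [Finset.mem_Icc] at hi
        have hi1 : 1 ≤ i := by omega
        have hiR : (0:ℝ) < (i:ℝ) := Nat.cast_pos.2 hi1
        have him : (i:ℝ) ≤ (m:ℝ) := by exact_mod_cast (by omega : i ≤ m)
        have h1 : C₁ / (i:ℝ)^(d+ε') ≤ S.ξ i := (hdec i hi1).1
        have h2 : (C₁ / (i:ℝ)^(d+ε'))^t ≤ S.ξ i ^ t :=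
          Real.rpow_le_rpow (by positivity) h1 ht.le
        have h3 : (C₁/(i:ℝ)^(d+ε'))^t = c / (i:ℝ)^s := by
          rw [Real.div_rpow hC₁.le (by positivity), hcdef, hsdef,
            Real.rpow_mul hiR.le]
        have h4 : (i:ℝ)^s ≤ (m:ℝ)^s := Real.rpow_le_rpow hiR.le him hs0.le
        have h5 : c / (m:ℝ)^s ≤ c / (i:ℝ)^s :=
          div_le_div_of_nonneg_left hc.le (Real.rpow_pos_of_pos hiR s) h4
        calc c / (m:ℝ)^s ≤ c / (i:ℝ)^s := h5
          _ = (C₁/(i:ℝ)^(d+ε'))^t := h3.symm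
          _ ≤ S.ξ i ^ t := h2
      have hcard := Finset.card_nsmul_le_sum _ _ _ hterm
      rw [Nat.card_Icc, nsmul_eq_mul] at hcard
      have hcast : ((m - 1 + 1 - (M+1) : ℕ) : ℝ) = (m:ℝ) - (M:ℝ) - 1 := by
        have e : m - 1 + 1 - (M+1) = m - (M+1) := by omega
        rw [e, Nat.cast_sub (by omega)]
        push_cast
        ring
      rw [hcast] at hcard
      have hkey : ((m:ℝ) - M - 1) * (c / (m:ℝ)^s) < 1 := lt_of_le_of_lt hcard hnotmem
      have hms : (0:ℝ) < (m:ℝ)^s := Real.rpow_pos_of_pos hmpos s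
      by_cases h6 : (m:ℝ)^s / c ≤ (m:ℝ)/2
      · -- m - M - 1 < m^s/c ≤ m/2, so m < 2M + 2 + ... ≤ Cr * l n
        have h7 : (m:ℝ) - M - 1 < (m:ℝ)^s / c := by
          have := mul_lt_mul_of_pos_right hkey (div_pos hms hc)
          rw [one_mul] at this
          calc (m:ℝ) - M - 1
              = ((m:ℝ) - M - 1) * ((c / (m:ℝ)^s) * ((m:ℝ)^s / c)) := by
                field_simp
            _ = ((m:ℝ) - M - 1) * (c / (m:ℝ)^s) * ((m:ℝ)^s / c) := by ring
            _ < (m:ℝ)^s / c := this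
        nlinarith
      · push_neg at h6
        have h8 : c * (m:ℝ) < 2 * (m:ℝ)^s := by
          rw [div_lt_div_iff₀ (by norm_num) hc] at h6
          nlinarith
        have h9 : (m:ℝ) = (m:ℝ)^s * (m:ℝ)^(1-s) := by
          rw [← Real.rpow_add hmpos]
          norm_num
        have h10 : (m:ℝ)^(1-s) < 2 / c := by
          rw [lt_div_iff₀ hc]
          nlinarith [Real.rpow_pos_of_pos hmpos (1-s)]
        have h11 : (m:ℝ) < m₀ := by
          have h12 : ((m:ℝ)^(1-s))^(1/(1-s)) < (2/c)^(1/(1-s)) :=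
            Real.rpow_lt_rpow (by positivity) h10 (one_div_pos.2 (by linarith))
          rwa [← Real.rpow_mul hmpos.le, mul_one_div, div_self (by linarith : (1:ℝ)-s ≠ 0),
            Real.rpow_one] at h12
        nlinarith
  -- logarithmic growth of l
  have hloglub : ∀ n : ℕ, 1 ≤ n → Real.log (l (n+1)) ≤ Real.log K + n * Real.log Cr := by
    intro n hn
    induction n, hn using Nat.le_induction with
    | base =>
        have h1 : (l 2 : ℝ) ≤ Cr * K := by
          have := hlub 1 le_rfl
          rwa [hl1] at this
        have h2 : (0:ℝ) < (l 2 : ℝ) := Nat.cast_pos.2 (hlge1 2 (by norm_num))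
        calc Real.log (l 2) ≤ Real.log (Cr * K) := Real.log_le_log h2 h1
          _ = Real.log Cr + Real.log K :=
              Real.log_mul (by linarith) (Nat.cast_ne_zero.2 (by omega))
          _ = Real.log K + (1:ℕ) * Real.log Cr := by push_cast; ring
    | succ n hn ih =>
        have h1 : (l (n+2) : ℝ) ≤ Cr * (l (n+1)) := hlub (n+1) (by omega)
        have h2 : (0:ℝ) < (l (n+2) : ℝ) := Nat.cast_pos.2 (hlge1 (n+2) (by omega))
        have h3 : (0:ℝ) < (l (n+1) : ℝ) := Nat.cast_pos.2 (hlge1 (n+1) (by omega))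
        have key : Real.log (l (n+2)) ≤ Real.log Cr + (Real.log K + n * Real.log Cr) := by
          calc Real.log (l (n+2)) ≤ Real.log (Cr * (l (n+1))) := Real.log_le_log h2 h1
            _ = Real.log Cr + Real.log (l (n+1)) := Real.log_mul (by linarith) h3.ne'
            _ ≤ Real.log Cr + (Real.log K + n * Real.log Cr) := by linarith
        push_cast
        linarith
  have hlogK : (0:ℝ) ≤ Real.log K := Real.log_nonneg (by exact_mod_cast hK)
  have hlogCr : (0:ℝ) ≤ Real.log Cr := Real.log_nonneg hCr1
  set A : ℝ := Real.log K + Real.log Cr with hAdef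
  have hA : 0 ≤ A := by positivity
  have hlogA : ∀ n : ℕ, 1 ≤ n → Real.log (l (n+1)) ≤ A * n := by
    intro n hn
    have h1 := hloglub n hn
    have hn1 : (1:ℝ) ≤ (n:ℝ) := by exact_mod_cast hn
    calc Real.log (l (n+1)) ≤ Real.log K + n * Real.log Cr := h1
      _ ≤ n * Real.log K + n * Real.log Cr := by nlinarith
      _ = A * n := by rw [hAdef]; ring
  -- the constants
  set B : ℝ := (1+δ)*Real.log C₂ - Real.log C₁ + (d+ε')*A with hBdef
  set B' : ℝ := |B| + 1 with hB'def
  have hB'pos : 0 < B' := by positivity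
  set M₀ : ℕ := ⌈Real.exp (4*B'/(δ*d))⌉₊ with hM₀def
  have hlogM₀ : 4*B'/(δ*d) < Real.log (M₀ + 1) := by
    rw [Real.lt_log_iff_exp_lt (by positivity)]
    calc Real.exp (4*B'/(δ*d)) ≤ (M₀ : ℝ) := Nat.le_ceil _
      _ < (M₀ : ℝ) + 1 := by linarith
  refine ⟨0, 2*M₀ + 2, ?_⟩
  intro a ha b hb n hn
  rw [Nat.add_zero]
  -- digit facts
  have hl1k : ∀ k : ℕ, (1:ℝ) ≤ (l (k+1) : ℝ) := fun k => by
    exact_mod_cast hlge1 (k+1) (by omega)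
  have haR : ∀ k : ℕ, (l (k+1) : ℝ) < (a k : ℝ) :=
    fun k => lt_of_le_of_lt (hΦ (l (k+1)) (hlge1 (k+1) (by omega))).1 (ha k).1
  have hbR : ∀ k : ℕ, (l (k+1) : ℝ) < (b k : ℝ) :=
    fun k => lt_of_le_of_lt (hΦ (l (k+1)) (hlge1 (k+1) (by omega))).1 (hb k).1
  have ha1 : ∀ k, 1 ≤ a k := by
    intro k
    have : (1:ℝ) < (a k : ℝ) := lt_of_lt_of_le (by linarith [hl1k k, haR k]) le_rfl
    exact_mod_cast Nat.one_le_iff_ne_zero.2 (by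
      intro h0
      rw [h0] at this
      norm_num at this)
  have hb1 : ∀ k, 1 ≤ b k := by
    intro k
    have : (1:ℝ) < (b k : ℝ) := by linarith [hl1k k, hbR k]
    by_contra h0
    push_neg at h0
    interval_cases h : b k <;> norm_num at this
  have hξa : ∀ k, 0 ≤ S.ξ (a k) := fun k => (hξpos (a k) (ha1 k)).le
  have hξb : ∀ k, 0 ≤ S.ξ (b k) := fun k => (hξpos (b k) (hb1 k)).le
  set Pa : ℝ := ∏ k ∈ Finset.range n, S.ξ (a k) with hPadef
  set Qb : ℝ := ∏ k ∈ Finset.range n, S.lam (b k) with hQbdef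
  have hPa_pos : 0 < Pa := Finset.prod_pos fun k _ => hξpos (a k) (ha1 k)
  have hQb_pos : 0 < Qb := Finset.prod_pos fun k _ => hlampos (b k) (hb1 k)
  set SS : ℝ := ∑ k ∈ Finset.range n, Real.log (l (k+1)) with hSSdef
  have hSSnonneg : 0 ≤ SS :=
    Finset.sum_nonneg fun k _ => Real.log_nonneg (hl1k k)
  have hn1 : 1 ≤ n := by omega
  set Ta : ℝ := ∑ k ∈ Finset.range n, Real.log (a k) with hTadef
  set Tb : ℝ := ∑ k ∈ Finset.range n, Real.log (b k) with hTbdef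
  -- (1) Ta ≤ SS + A*n
  have hTa : Ta ≤ SS + A * n := by
    have step1 : Ta ≤ ∑ k ∈ Finset.range n, Real.log (l (k+2)) := by
      refine Finset.sum_le_sum fun k _ => ?_
      refine Real.log_le_log (by linarith [hl1k k, haR k]) ?_
      exact_mod_cast (ha k).2
    have e1 : ∑ k ∈ Finset.range (n+1), Real.log (l (k+1))
        = (∑ k ∈ Finset.range n, Real.log (l (k+2))) + Real.log (l 1) :=
      Finset.sum_range_succ' (fun k => Real.log (l (k+1))) n
    have e2 : ∑ k ∈ Finset.range (n+1), Real.log (l (k+1))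
        = SS + Real.log (l (n+1)) := Finset.sum_range_succ _ n
    have hlogl1 : 0 ≤ Real.log (l 1) := Real.log_nonneg (by rw [hl1]; exact_mod_cast hK)
    have := hlogA n hn1
    linarith
  -- (2) SS ≤ Tb
  have hTb : SS ≤ Tb := by
    refine Finset.sum_le_sum fun k _ => ?_
    exact Real.log_le_log (by linarith [hl1k k]) (hbR k).le
  -- (3) lower bound for SS
  have hSSlb : (n:ℝ) * B' < (δ*d/2) * SS := by
    have hsub : Finset.Ico M₀ n ⊆ Finset.range n := by
      intro k hk
      rw [Finset.mem_Ico] at hk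
      exact Finset.mem_range.2 hk.2
    have h1 : ∑ k ∈ Finset.Ico M₀ n, Real.log (l (k+1)) ≤ SS := by
      refine Finset.sum_le_sum_of_subset_of_nonneg hsub fun k _ _ => ?_
      exact Real.log_nonneg (hl1k k)
    have h2 : ∀ k ∈ Finset.Ico M₀ n, Real.log ((M₀:ℝ) + 1) ≤ Real.log (l (k+1)) := by
      intro k hk
      rw [Finset.mem_Ico] at hk
      refine Real.log_le_log (by positivity) ?_
      have : M₀ + 1 ≤ l (k+1) := le_trans (by omega) (hlgen (k+1) (by omega))
      exact_mod_cast this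
    have h3 := Finset.card_nsmul_le_sum _ _ _ h2
    rw [Nat.card_Ico, nsmul_eq_mul] at h3
    have hcastM : ((n - M₀ : ℕ) : ℝ) = (n:ℝ) - (M₀:ℝ) := by
      rw [Nat.cast_sub (by omega)]
    rw [hcastM] at h3
    have hnM : (n:ℝ)/2 ≤ (n:ℝ) - (M₀:ℝ) := by
      have : (2*M₀ + 2 : ℕ) < n := hn
      have : (2*(M₀:ℝ) + 2) < (n:ℝ) := by exact_mod_cast this
      linarith
    have hnpos : (0:ℝ) < (n:ℝ) := Nat.cast_pos.2 (by omega)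
    have hlogM₀pos : 0 ≤ Real.log ((M₀:ℝ)+1) :=
      Real.log_nonneg (by linarith [Nat.cast_nonneg (α := ℝ) M₀])
    have h4 : (n:ℝ)/2 * Real.log ((M₀:ℝ)+1) ≤ SS :=
      le_trans (mul_le_mul_of_nonneg_right hnM hlogM₀pos) (le_trans h3 h1)
    have h5 : 4*B' < (δ*d) * Real.log ((M₀:ℝ)+1) := by
      rw [div_lt_iff₀ (by positivity)] at hlogM₀
      linarith
    have h6 := mul_le_mul_of_nonneg_left h4 (by positivity : (0:ℝ) ≤ δ*d/2)
    have h7 := mul_lt_mul_of_pos_left h5 (by positivity : (0:ℝ) < (n:ℝ)/4)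
    linarith [h6, h7]
  -- log-product bounds
  have hLP : (n:ℝ) * Real.log C₁ - (d+ε') * Ta ≤ Real.log Pa := by
    rw [hPadef, Real.log_prod (fun k _ => (hξpos (a k) (ha1 k)).ne')]
    have hterm : ∀ k ∈ Finset.range n,
        Real.log C₁ - (d+ε') * Real.log (a k) ≤ Real.log (S.ξ (a k)) := by
      intro k _
      have hak : (0:ℝ) < (a k : ℝ) := Nat.cast_pos.2 (ha1 k)
      have h1 : Real.log (C₁ / (a k : ℝ)^(d+ε')) ≤ Real.log (S.ξ (a k)) :=
        Real.log_le_log (by positivity) (hdec (a k) (ha1 k)).1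
      rwa [Real.log_div hC₁.ne' (by positivity), Real.log_rpow hak] at h1
    calc (n:ℝ) * Real.log C₁ - (d+ε') * Ta
        = ∑ k ∈ Finset.range n, (Real.log C₁ - (d+ε') * Real.log (a k)) := by
          rw [Finset.sum_sub_distrib, Finset.sum_const, ← Finset.mul_sum]
          simp [hTadef]
      _ ≤ _ := Finset.sum_le_sum hterm
  have hLQ : Real.log Qb ≤ (n:ℝ) * Real.log C₂ - (d-ε') * Tb := by
    rw [hQbdef, Real.log_prod (fun k _ => (hlampos (b k) (hb1 k)).ne')]
    have hterm : ∀ k ∈ Finset.range n,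
        Real.log (S.lam (b k)) ≤ Real.log C₂ - (d-ε') * Real.log (b k) := by
      intro k _
      have hbk : (0:ℝ) < (b k : ℝ) := Nat.cast_pos.2 (hb1 k)
      have h1 : Real.log (S.lam (b k)) ≤ Real.log (C₂ / (b k : ℝ)^(d-ε')) :=
        Real.log_le_log (hlampos (b k) (hb1 k)) (hdec (b k) (hb1 k)).2
      rwa [Real.log_div hC₂.ne' (by positivity), Real.log_rpow hbk] at h1
    calc ∑ k ∈ Finset.range n, Real.log (S.lam (b k))
        ≤ ∑ k ∈ Finset.range n, (Real.log C₂ - (d-ε') * Real.log (b k)) :=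
          Finset.sum_le_sum hterm
      _ = (n:ℝ) * Real.log C₂ - (d-ε') * Tb := by
          rw [Finset.sum_sub_distrib, Finset.sum_const, ← Finset.mul_sum]
          simp [hTbdef]
  -- conclude (clear let-values to keep arithmetic fast)
  have hdiam_b := S.diam_cyl_le b hb1 hξb n
  have hdiam_a := S.le_diam_cyl a ha1 hξa n
  rw [← hQbdef] at hdiam_b
  rw [← hPadef] at hdiam_a
  clear_value ε' t s c m₀ Cr A B B' M₀ Pa Qb SS Ta Tb
  -- combine
  have hfinal : (1+δ) * Real.log Qb < Real.log Pa := by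
    have hh1 : (d+ε') * Ta ≤ (d+ε') * (SS + A*n) :=
      mul_le_mul_of_nonneg_left hTa (by linarith)
    have hh2 : (1+δ) * Real.log Qb ≤ (1+δ) * ((n:ℝ) * Real.log C₂ - (d-ε') * Tb) :=
      mul_le_mul_of_nonneg_left hLQ (by linarith)
    have hh3 : (1+δ)*((d-ε') * SS) ≤ (1+δ)*((d-ε') * Tb) :=
      mul_le_mul_of_nonneg_left (mul_le_mul_of_nonneg_left hTb (by linarith)) (by linarith)
    have hh4 : ((1+δ)*(d-ε') - (d+ε')) * SS ≥ (δ*d/2) * SS :=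
      mul_le_mul_of_nonneg_right hgap hSSnonneg
    have hB : B ≤ |B| := le_abs_self B
    have hnB : (n:ℝ) * B ≤ (n:ℝ) * |B| :=
      mul_le_mul_of_nonneg_left hB (by positivity)
    have hnpos : (0:ℝ) < (n:ℝ) := Nat.cast_pos.2 (by omega)
    rw [hBdef] at hnB
    rw [hB'def, hBdef] at hSSlb
    linarith [hSSlb, hh1, hh2, hh3, hh4, hLP, hnB, hnpos]
  have hQrpow : Qb ^ (1+δ) < Pa := by
    have h1 : Real.log (Qb^(1+δ)) < Real.log Pa := by
      rw [Real.log_rpow hQb_pos]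
      exact hfinal
    exact (Real.log_lt_log_iff (Real.rpow_pos_of_pos hQb_pos _) hPa_pos).1 h1
  calc Metric.diam (S.cyl b n) ^ (1+δ) ≤ Qb ^ (1+δ) :=
        Real.rpow_le_rpow Metric.diam_nonneg hdiam_b (add_nonneg zero_le_one hδ.le)
    _ < Pa := hQrpow
    _ ≤ Metric.diam (S.cyl a n) := hdiam_a
end
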